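/- arXiv:2301.04043 — 3 statements merged into one kernel-verified Lean document; each statement's English description precedes it below -/
import Mathlib

section
/- There exists an absolute constant c' > 0 with the following property. Let n ≥ 1, let A, A₁ be n×n real matrices, let P be a symmetric positive definite n×n matrix and Q a symmetric positive definite n×n matrix satisfying the Lyapunov equation (A + A₁)ᵀP + P(A + A₁) = −Q. If the hold length Δ > 0 satisfies Δ ≤ c' · σ_min(Q) / (σ_max(P) · (σ_max(A) + σ_max(A₁))²), then the sampled-data system determined by (A, A₁, Δ) is asymptotically stable: for every admissible sampling sequence and every solution x, x(t) → 0 as t → ∞. -/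
open Matrix Filter

/-- A matrix acting on Euclidean space (so that `‖·‖` is the Euclidean norm). -/
noncomputable def mulVecE {n : ℕ} (M : Matrix (Fin n) (Fin n) ℝ)
    (x : EuclideanSpace ℝ (Fin n)) : EuclideanSpace ℝ (Fin n) :=
  WithLp.toLp 2 (M.mulVec x)

/-- The largest singular value of `M`, i.e. its ℓ²→ℓ² operator norm. -/
noncomputable def sigmaMax {n : ℕ} (M : Matrix (Fin n) (Fin n) ℝ) : ℝ :=
  ‖Matrix.toEuclideanCLM (𝕜 := ℝ) (n := Fin n) M‖

/-- The smallest eigenvalue of a symmetric matrix, via the Rayleigh quotient. -/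
noncomputable def sigmaMin {n : ℕ} (Q : Matrix (Fin n) (Fin n) ℝ) : ℝ :=
  sInf {r : ℝ | ∃ x : EuclideanSpace ℝ (Fin n), ‖x‖ = 1 ∧ inner (𝕜 := ℝ) x (mulVecE Q x) = r}

/-- An admissible sampling sequence for hold length `Δ`:
`t 0 = 0`, strictly increasing, steps at most `Δ`, tending to infinity. -/
def AdmissibleSampling (Δ : ℝ) (t : ℕ → ℝ) : Prop :=
  t 0 = 0 ∧ StrictMono t ∧ (∀ k, t (k + 1) - t k ≤ Δ) ∧
    Filter.Tendsto t Filter.atTop Filter.atTop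

/-- A solution of the sampled-data system `ẋ(t) = A x(t) + A₁ x(t_k)` on `[0,∞)`. -/
def IsSolution {n : ℕ} (A A₁ : Matrix (Fin n) (Fin n) ℝ) (t : ℕ → ℝ)
    (x : ℝ → EuclideanSpace ℝ (Fin n)) : Prop :=
  ContinuousOn x (Set.Ici 0) ∧
  ∀ k : ℕ, ∀ s ∈ Set.Icc (t k) (t (k + 1)),
    HasDerivWithinAt x (mulVecE A (x s) + mulVecE A₁ (x (t k)))
      (Set.Icc (t k) (t (k + 1))) s

lemma norm_mulVecE_le {n : ℕ} (M : Matrix (Fin n) (Fin n) ℝ) (x : EuclideanSpace ℝ (Fin n)) :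
    ‖mulVecE M x‖ ≤ sigmaMax M * ‖x‖ :=
  (Matrix.toEuclideanCLM (𝕜 := ℝ) M).le_opNorm x

lemma sigmaMin_lb {n : ℕ} (hn : 1 ≤ n) (Q : Matrix (Fin n) (Fin n) ℝ) (hQ : Q.PosDef) :
    0 < sigmaMin Q ∧ ∀ v : EuclideanSpace ℝ (Fin n),
      sigmaMin Q * ‖v‖ ^ 2 ≤ inner (𝕜 := ℝ) v (mulVecE Q v) := by
  haveI : NeZero n := ⟨by omega⟩
  set f : EuclideanSpace ℝ (Fin n) → ℝ := fun v => inner (𝕜 := ℝ) v (mulVecE Q v) with hf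
  have hfc : Continuous f := by
    have : f = fun v => inner (𝕜 := ℝ) v (Matrix.toEuclideanCLM (𝕜 := ℝ) Q v) := rfl
    rw [this]
    exact continuous_id.inner (Matrix.toEuclideanCLM (𝕜 := ℝ) Q).continuous
  have hS : {r : ℝ | ∃ x : EuclideanSpace ℝ (Fin n), ‖x‖ = 1 ∧ inner (𝕜 := ℝ) x (mulVecE Q x) = r}
      = f '' Metric.sphere 0 1 := by
    ext r
    constructor
    · rintro ⟨v, hv, hr⟩
      exact ⟨v, by simpa [mem_sphere_zero_iff_norm] using hv, hr⟩
    · rintro ⟨v, hv, hr⟩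
      exact ⟨v, by simpa [mem_sphere_zero_iff_norm] using hv, hr⟩
  have hne : (Metric.sphere (0 : EuclideanSpace ℝ (Fin n)) 1).Nonempty := by
    refine ⟨EuclideanSpace.single (0 : Fin n) (1 : ℝ), ?_⟩
    simp [mem_sphere_zero_iff_norm]
  obtain ⟨v0, hv0, hmin⟩ := (isCompact_sphere (0 : EuclideanSpace ℝ (Fin n)) 1).exists_isMinOn
    hne hfc.continuousOn
  have hleast : IsLeast (f '' Metric.sphere 0 1) (f v0) :=
    ⟨⟨v0, hv0, rfl⟩, by rintro r ⟨w, hw, rfl⟩; exact hmin hw⟩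
  have hval : sigmaMin Q = f v0 := by rw [sigmaMin, hS]; exact hleast.csInf_eq
  have hpos : ∀ v : EuclideanSpace ℝ (Fin n), v ≠ 0 → 0 < f v := by
    intro v hv
    have h2 := hQ.dotProduct_mulVec_pos (x := (WithLp.equiv 2 (Fin n → ℝ)) v) (by simpa using hv)
    have : star ((WithLp.equiv 2 (Fin n → ℝ)) v) = (WithLp.equiv 2 (Fin n → ℝ)) v := by
      funext i; simp
    rw [this, dotProduct_comm] at h2
    exact h2
  have hlb : ∀ v : EuclideanSpace ℝ (Fin n), sigmaMin Q * ‖v‖ ^ 2 ≤ f v := by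
    intro v
    rcases eq_or_ne v 0 with rfl | hv
    · simp [hf, mulVecE]
    · have hvn : ‖v‖ ≠ 0 := norm_ne_zero_iff.2 hv
      set u : EuclideanSpace ℝ (Fin n) := ‖v‖⁻¹ • v with hu
      have hun : ‖u‖ = 1 := norm_smul_inv_norm hv
      have hmem : f u ∈ f '' Metric.sphere 0 1 :=
        ⟨u, by simpa [mem_sphere_zero_iff_norm] using hun, rfl⟩
      have h1 : sigmaMin Q ≤ f u := by
        rw [hval]; exact hleast.2 hmem
      have hfu : f u = ‖v‖⁻¹ ^ 2 * f v := by
        have : mulVecE Q u = ‖v‖⁻¹ • mulVecE Q v := by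
          show Matrix.toEuclideanCLM (𝕜 := ℝ) Q u = _
          rw [hu, _root_.map_smul]; rfl
        rw [hf]; simp only [this]
        simp only [hu, this, real_inner_smul_left, real_inner_smul_right]
        ring
      have h2 : sigmaMin Q * ‖v‖ ^ 2 ≤ f u * ‖v‖ ^ 2 := by
        apply mul_le_mul_of_nonneg_right h1 (by positivity)
      calc sigmaMin Q * ‖v‖ ^ 2 ≤ f u * ‖v‖ ^ 2 := h2
        _ = f v := by rw [hfu]; field_simp
  refine ⟨?_, hlb⟩
  rw [hval]
  exact hpos v0 (by intro h; rw [h] at hv0; simp at hv0)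

lemma exp_sixth_lt : Real.exp (1/6 : ℝ) < 3/2 := by
  have h6 : Real.exp (1/6 : ℝ) ^ 6 = Real.exp 1 := by
    rw [← Real.exp_nat_mul]; norm_num
  have h1 : Real.exp 1 < (3/2 : ℝ) ^ 6 := by
    have := Real.exp_one_lt_d9
    nlinarith
  have := lt_of_pow_lt_pow_left₀ 6 (by norm_num : (0:ℝ) ≤ 3/2) (h6 ▸ h1)
  exact this

set_option maxHeartbeats 1000000 in
lemma key_interval {n : ℕ} (A A₁ P : Matrix (Fin n) (Fin n) ℝ)
    (L σP σQ : ℝ) (hL : 0 < L) (hσP : 0 < σP) (hσQ : 0 < σQ)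
    (hA : ∀ v, ‖mulVecE A v‖ ≤ L * ‖v‖)
    (hA1 : ∀ v, ‖mulVecE A₁ v‖ ≤ L * ‖v‖)
    (hP : ∀ v, ‖mulVecE P v‖ ≤ σP * ‖v‖)
    (hPsym : ∀ u v, inner (𝕜 := ℝ) u (mulVecE P v) = inner (𝕜 := ℝ) (mulVecE P u) v)
    (hLyap : ∀ v : EuclideanSpace ℝ (Fin n),
      inner (𝕜 := ℝ) (mulVecE A v + mulVecE A₁ v) (mulVecE P v)
        + inner (𝕜 := ℝ) v (mulVecE P (mulVecE A v + mulVecE A₁ v)) ≤ -(σQ * ‖v‖ ^ 2))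
    (hVpos : ∀ v : EuclideanSpace ℝ (Fin n), 0 ≤ inner (𝕜 := ℝ) v (mulVecE P v))
    (Δ : ℝ) (hΔpos : 0 < Δ) (hLΔ : L * Δ ≤ 1/6) (hΔ2 : 432 * σP * L^2 * Δ ≤ σQ)
    (a b : ℝ) (hab : a < b) (hba : b - a ≤ Δ)
    (x : ℝ → EuclideanSpace ℝ (Fin n))
    (hx : ∀ s ∈ Set.Icc a b, HasDerivWithinAt x (mulVecE A (x s) + mulVecE A₁ (x a)) (Set.Icc a b) s) :
    (∀ s ∈ Set.Icc a b, ‖x s‖ ≤ 3 * ‖x a‖) ∧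
      inner (𝕜 := ℝ) (x b) (mulVecE P (x b)) ≤
        inner (𝕜 := ℝ) (x a) (mulVecE P (x a)) * Real.exp (-(σQ / (18 * σP) * (b - a))) := by
  set c := ‖x a‖ with hc
  have hc0 : 0 ≤ c := norm_nonneg _
  set d : ℝ → EuclideanSpace ℝ (Fin n) := fun s => mulVecE A (x s) + mulVecE A₁ (x a) with hd
  have hcont : ContinuousOn x (Set.Icc a b) := fun s hs => (hx s hs).continuousWithinAt
  -- right derivative within Ici
  have hxIci : ∀ s ∈ Set.Ico a b, HasDerivWithinAt x (d s) (Set.Ici s) s := by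
    intro s hs
    have h1 : HasDerivWithinAt x (d s) (Set.Icc a b) s := hx s (Set.Ico_subset_Icc_self hs)
    exact h1.mono_of_mem_nhdsWithin (Icc_mem_nhdsGE_of_mem hs)
  -- derivative norm bound in terms of ‖x s‖
  have hdbound : ∀ s, ‖d s‖ ≤ L * ‖x s‖ + L * c := by
    intro s
    calc ‖d s‖ ≤ ‖mulVecE A (x s)‖ + ‖mulVecE A₁ (x a)‖ := norm_add_le _ _
      _ ≤ L * ‖x s‖ + L * c := add_le_add (hA _) (hA1 _)
  -- Gronwall growth bound : ‖x s‖ ≤ 2 c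
  have hgrow : ∀ s ∈ Set.Icc a b, ‖x s‖ ≤ 2 * c := by
    have hg := norm_le_gronwallBound_of_norm_deriv_right_le (f := x) (f' := d)
      (δ := c) (K := L) (ε := L * c) (a := a) (b := b) hcont hxIci le_rfl
      (fun s hs => hdbound s)
    intro s hs
    have h1 := hg s hs
    rw [gronwallBound_of_K_ne_0 (ne_of_gt hL)] at h1
    have he : Real.exp (L * (s - a)) ≤ 3/2 := by
      have h2 : L * (s - a) ≤ 1/6 := by nlinarith [hs.1, hs.2]
      calc Real.exp (L * (s - a)) ≤ Real.exp (1/6) := Real.exp_le_exp.2 h2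
        _ ≤ 3/2 := le_of_lt exp_sixth_lt
    have hexp0 : (1:ℝ) ≤ Real.exp (L * (s - a)) := by
      rw [Real.one_le_exp_iff]; nlinarith [hs.1]
    replace h1 : ‖x s‖ ≤ c * Real.exp (L * (s-a)) + L * c / L * (Real.exp (L * (s-a)) - 1) := h1
    rw [show L * c / L = c from by field_simp] at h1
    nlinarith
  -- error bound : ‖x s - x a‖ ≤ 3 L c (s - a)
  have herr : ∀ s ∈ Set.Icc a b, ‖x s - x a‖ ≤ 3 * L * c * (s - a) := by
    have := norm_image_sub_le_of_norm_deriv_le_segment' (f := x) (f' := d) (C := 3 * L * c) hx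
      (fun s hs => by
        have := hdbound s
        have h2 := hgrow s (Set.Ico_subset_Icc_self hs)
        nlinarith)
    intro s hs
    have h := this s hs
    linarith [h]
  have hbound3 : ∀ s ∈ Set.Icc a b, ‖x s‖ ≤ 3 * c := fun s hs => by nlinarith [hgrow s hs]
  refine ⟨hbound3, ?_⟩
  set K₀ : ℝ := σQ / 18 * c ^ 2 with hK₀
  set V : EuclideanSpace ℝ (Fin n) → ℝ := fun v => inner (𝕜 := ℝ) v (mulVecE P v) with hV
  set g : ℝ → ℝ := fun s => V (x s) + K₀ * s with hg
  have hVc : Continuous V := by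
    have : V = fun v => inner (𝕜 := ℝ) v (Matrix.toEuclideanCLM (𝕜 := ℝ) P v) := rfl
    rw [this]
    exact continuous_id.inner (Matrix.toEuclideanCLM (𝕜 := ℝ) P).continuous
  -- the derivative of g at interior points
  have hderiv : ∀ s ∈ Set.Ioo a b, HasDerivAt g
      ((inner (𝕜 := ℝ) (x s) (mulVecE P (d s)) + inner (𝕜 := ℝ) (d s) (mulVecE P (x s))) + K₀) s := by
    intro s hs
    have hxs : HasDerivAt x (d s) s :=
      (hx s (Set.Ioo_subset_Icc_self hs)).hasDerivAt (Icc_mem_nhds hs.1 hs.2)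
    have hPx : HasDerivAt (fun s => mulVecE P (x s)) (mulVecE P (d s)) s :=
      ((Matrix.toEuclideanCLM (𝕜 := ℝ) P).hasFDerivAt).comp_hasDerivAt s hxs
    have hVx : HasDerivAt (fun s => V (x s))
        (inner (𝕜 := ℝ) (x s) (mulVecE P (d s)) + inner (𝕜 := ℝ) (d s) (mulVecE P (x s))) s :=
      hxs.inner ℝ hPx
    have hlin : HasDerivAt (fun s : ℝ => K₀ * s) K₀ s := by
      simpa using (hasDerivAt_id s).const_mul K₀
    exact hVx.add hlin
  -- the derivative is nonpositive
  have hderiv_np : ∀ s ∈ Set.Ioo a b,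
      (inner (𝕜 := ℝ) (x s) (mulVecE P (d s)) + inner (𝕜 := ℝ) (d s) (mulVecE P (x s))) + K₀ ≤ 0 := by
    intro s hs
    have hsIcc : s ∈ Set.Icc a b := Set.Ioo_subset_Icc_self hs
    set e : EuclideanSpace ℝ (Fin n) := x a - x s with he
    have hsplit : d s = (mulVecE A (x s) + mulVecE A₁ (x s)) + mulVecE A₁ e := by
      have h1 : mulVecE A₁ (x a) = mulVecE A₁ (x s) + mulVecE A₁ e := by
        show Matrix.toEuclideanCLM (𝕜 := ℝ) A₁ (x a) =
          Matrix.toEuclideanCLM (𝕜 := ℝ) A₁ (x s) + Matrix.toEuclideanCLM (𝕜 := ℝ) A₁ e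
        rw [← map_add]
        congr 1
        rw [he]
        abel
      show mulVecE A (x s) + mulVecE A₁ (x a) = _
      rw [h1]
      abel
    have hPadd : ∀ u v : EuclideanSpace ℝ (Fin n), mulVecE P (u + v) = mulVecE P u + mulVecE P v := by
      intro u v
      show Matrix.toEuclideanCLM (𝕜 := ℝ) P (u + v) = _
      rw [map_add]; rfl
    have hexpand : (inner (𝕜 := ℝ) (x s) (mulVecE P (d s)) + inner (𝕜 := ℝ) (d s) (mulVecE P (x s)))
        = ((inner (𝕜 := ℝ) (mulVecE A (x s) + mulVecE A₁ (x s)) (mulVecE P (x s))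
            + inner (𝕜 := ℝ) (x s) (mulVecE P (mulVecE A (x s) + mulVecE A₁ (x s))))
          + 2 * inner (𝕜 := ℝ) (mulVecE A₁ e) (mulVecE P (x s))) := by
      rw [hsplit, hPadd, inner_add_right, inner_add_left]
      have h2 : inner (𝕜 := ℝ) (x s) (mulVecE P (mulVecE A₁ e))
          = inner (𝕜 := ℝ) (mulVecE A₁ e) (mulVecE P (x s)) := by
        rw [hPsym, real_inner_comm]
      rw [h2]
      ring
    rw [hexpand]
    have hB := hLyap (x s)
    -- error term bound
    have hne : ‖e‖ ≤ 3 * L * c * Δ := by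
      have h1 := herr s hsIcc
      have h2 : ‖e‖ = ‖x s - x a‖ := by rw [he, norm_sub_rev]
      have h3 : s - a ≤ Δ := by linarith [hs.2.le]
      have h4 : 3 * L * c * (s - a) ≤ 3 * L * c * Δ :=
        mul_le_mul_of_nonneg_left h3 (by positivity)
      rw [h2]; linarith
    have hnxs_ub : ‖x s‖ ≤ 2 * c := hgrow s hsIcc
    have hnxs_lb : c / 2 ≤ ‖x s‖ := by
      have h1 : c ≤ ‖x s‖ + ‖x a - x s‖ := by
        calc c = ‖x s + (x a - x s)‖ := by rw [hc]; congr 1; abel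
          _ ≤ ‖x s‖ + ‖x a - x s‖ := norm_add_le _ _
      have h2 : ‖x a - x s‖ ≤ 3 * L * c * Δ := by
        rw [show x a - x s = e from he.symm]; exact hne
      nlinarith [mul_le_mul_of_nonneg_right hLΔ hc0]
    have hErr : inner (𝕜 := ℝ) (mulVecE A₁ e) (mulVecE P (x s)) ≤ L * ‖e‖ * (σP * ‖x s‖) := by
      calc inner (𝕜 := ℝ) (mulVecE A₁ e) (mulVecE P (x s)) ≤ ‖mulVecE A₁ e‖ * ‖mulVecE P (x s)‖ :=
            real_inner_le_norm _ _
        _ ≤ L * ‖e‖ * (σP * ‖x s‖) := by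
            apply mul_le_mul (hA1 e) (hP (x s)) (norm_nonneg _) (by positivity)
    have hne0 : 0 ≤ ‖e‖ := norm_nonneg _
    have hsq : c ^ 2 / 4 ≤ ‖x s‖ ^ 2 := by
      have h5 := pow_le_pow_left₀ (by positivity : (0:ℝ) ≤ c / 2) hnxs_lb 2
      nlinarith [h5]
    have hEbound : L * ‖e‖ * (σP * ‖x s‖) ≤ 6 * σP * L ^ 2 * Δ * c ^ 2 := by
      have h6 : ‖e‖ * ‖x s‖ ≤ 3 * L * c * Δ * (2 * c) :=
        mul_le_mul hne hnxs_ub (norm_nonneg _) (by positivity)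
      have h7 := mul_le_mul_of_nonneg_left h6 (mul_nonneg hL.le hσP.le)
      nlinarith [h7]
    have h12 : 12 * σP * L ^ 2 * Δ * c ^ 2 ≤ σQ / 36 * c ^ 2 := by nlinarith [sq_nonneg c]
    nlinarith [hB, hErr, hEbound, hsq, mul_le_mul_of_nonneg_left hsq hσQ.le]
  -- antitone
  have hganti : AntitoneOn g (Set.Icc a b) := by
    apply antitoneOn_of_deriv_nonpos (convex_Icc a b)
    · exact (hVc.comp_continuousOn hcont).add (continuous_const.mul continuous_id).continuousOn
    · rw [interior_Icc]
      intro s hs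
      exact (hderiv s hs).differentiableAt.differentiableWithinAt
    · rw [interior_Icc]
      intro s hs
      rw [(hderiv s hs).deriv]
      exact hderiv_np s hs
  have hgba : g b ≤ g a :=
    hganti (Set.left_mem_Icc.2 hab.le) (Set.right_mem_Icc.2 hab.le) hab.le
  -- conclude
  have hVb : V (x b) ≤ V (x a) - K₀ * (b - a) := by
    have : V (x b) + K₀ * b ≤ V (x a) + K₀ * a := hgba
    linarith
  have hVa_ub : V (x a) ≤ σP * c ^ 2 := by
    calc V (x a) ≤ ‖x a‖ * ‖mulVecE P (x a)‖ := real_inner_le_norm _ _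
      _ ≤ σP * c ^ 2 := by nlinarith [hP (x a), norm_nonneg (mulVecE P (x a))]
  have hVa_nn : 0 ≤ V (x a) := hVpos (x a)
  set α : ℝ := σQ / (18 * σP) with hα
  have hαnn : 0 ≤ α := by positivity
  have hh : 0 < b - a := sub_pos.2 hab
  have hK₀α : α * V (x a) ≤ K₀ := by
    rw [hα, hK₀]
    rw [div_mul_eq_mul_div, div_le_iff₀ (by positivity : (0:ℝ) < 18 * σP)] at *
    nlinarith [hVa_ub]
  have hexp : 1 - α * (b - a) ≤ Real.exp (-(α * (b - a))) := by
    have := Real.add_one_le_exp (-(α * (b - a)))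
    linarith
  show V (x b) ≤ V (x a) * Real.exp (-(σQ / (18 * σP) * (b - a)))
  have h1 : V (x b) ≤ V (x a) * (1 - α * (b - a)) := by nlinarith [hK₀α, hh.le]
  calc V (x b) ≤ V (x a) * (1 - α * (b - a)) := h1
    _ ≤ V (x a) * Real.exp (-(α * (b - a))) := mul_le_mul_of_nonneg_left hexp hVa_nn


set_option maxHeartbeats 1000000 in
/-- a sufficient hold-length condition for asymptotic stability of the
sampled-data system, from a Lyapunov equation for the continuous closed loop. -/
theorem sampled_data_stable_of_small_hold :
    ∃ c' : ℝ, 0 < c' ∧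
      ∀ (n : ℕ), 1 ≤ n →
        ∀ A A₁ P Q : Matrix (Fin n) (Fin n) ℝ,
          P.PosDef → Q.PosDef →
          (A + A₁)ᵀ * P + P * (A + A₁) = -Q →
          ∀ Δ : ℝ, 0 < Δ →
            Δ ≤ c' * sigmaMin Q / (sigmaMax P * (sigmaMax A + sigmaMax A₁) ^ 2) →
            ∀ t : ℕ → ℝ, AdmissibleSampling Δ t →
              ∀ x : ℝ → EuclideanSpace ℝ (Fin n), IsSolution A A₁ t x →
                Filter.Tendsto x Filter.atTop (nhds 0) := by
  refine ⟨1/432, by norm_num, ?_⟩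
  intro n hn A A₁ P Q hP hQ hLyapEq Δ hΔpos hΔle t ht x hsol
  haveI : NeZero n := ⟨by omega⟩
  obtain ⟨ht0, htmono, htstep, httop⟩ := ht
  obtain ⟨hxcont, hxder⟩ := hsol
  set L : ℝ := sigmaMax A + sigmaMax A₁ with hLdef
  set σP : ℝ := sigmaMax P with hσPdef
  obtain ⟨hσQpos, hQlb⟩ := sigmaMin_lb hn Q hQ
  obtain ⟨hmPpos, hPlb⟩ := sigmaMin_lb hn P hP
  set σQ : ℝ := sigmaMin Q with hσQdef
  set mP : ℝ := sigmaMin P with hmPdef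
  clear_value σQ mP
  have hLnn : 0 ≤ L := add_nonneg (norm_nonneg _) (norm_nonneg _)
  have hA : ∀ v, ‖mulVecE A v‖ ≤ L * ‖v‖ := by
    intro v
    have h1 := norm_mulVecE_le A v
    rw [hLdef]
    have h2 : (0:ℝ) ≤ sigmaMax A₁ := norm_nonneg _
    linarith [mul_nonneg h2 (norm_nonneg v)]
  have hA1 : ∀ v, ‖mulVecE A₁ v‖ ≤ L * ‖v‖ := by
    intro v
    have h1 := norm_mulVecE_le A₁ v
    rw [hLdef]
    have h2 : (0:ℝ) ≤ sigmaMax A := norm_nonneg _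
    linarith [mul_nonneg h2 (norm_nonneg v)]
  have hPub : ∀ v, ‖mulVecE P v‖ ≤ σP * ‖v‖ := norm_mulVecE_le P
  -- symmetry of P
  have hPt : Pᵀ = P := by
    have h1 := hP.1
    rwa [Matrix.IsHermitian, conjTranspose_eq_transpose_of_trivial] at h1
  have hPsym : ∀ u v : EuclideanSpace ℝ (Fin n),
      inner (𝕜 := ℝ) u (mulVecE P v) = inner (𝕜 := ℝ) (mulVecE P u) v := by
    intro u v
    show dotProduct (P *ᵥ (WithLp.ofLp v)) (WithLp.ofLp u)
      = dotProduct (WithLp.ofLp v) (P *ᵥ (WithLp.ofLp u))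
    conv_lhs => rw [← hPt]
    rw [Matrix.dotProduct_mulVec, Matrix.mulVec_transpose]
  -- the Lyapunov inequality
  have hLyap : ∀ v : EuclideanSpace ℝ (Fin n),
      inner (𝕜 := ℝ) (mulVecE A v + mulVecE A₁ v) (mulVecE P v)
        + inner (𝕜 := ℝ) v (mulVecE P (mulVecE A v + mulVecE A₁ v)) ≤ -(σQ * ‖v‖ ^ 2) := by
    intro v
    have hsum : mulVecE A v + mulVecE A₁ v = mulVecE (A + A₁) v := by
      show _ = WithLp.toLp 2 ((A + A₁) *ᵥ (WithLp.ofLp v))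
      rw [Matrix.add_mulVec]
      rfl
    rw [hsum]
    set u := WithLp.equiv 2 (Fin n → ℝ) v with hu
    have hkey : inner (𝕜 := ℝ) (mulVecE (A + A₁) v) (mulVecE P v)
        + inner (𝕜 := ℝ) v (mulVecE P (mulVecE (A + A₁) v))
        = -(inner (𝕜 := ℝ) v (mulVecE Q v)) := by
      show dotProduct (P *ᵥ u) ((A + A₁) *ᵥ u)
          + dotProduct (P *ᵥ ((A + A₁) *ᵥ u)) u
        = -(dotProduct (Q *ᵥ u) u)
      rw [dotProduct_comm (P *ᵥ u), dotProduct_comm (P *ᵥ _) u, dotProduct_comm (Q *ᵥ u) u]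
      have h1 : dotProduct ((A + A₁) *ᵥ u) (P *ᵥ u)
          = dotProduct u (((A + A₁)ᵀ * P) *ᵥ u) := by
        rw [← Matrix.mulVec_mulVec, Matrix.dotProduct_mulVec u (A + A₁)ᵀ,
          Matrix.vecMul_transpose]
      have h2 : dotProduct u (P *ᵥ ((A + A₁) *ᵥ u))
          = dotProduct u ((P * (A + A₁)) *ᵥ u) := by
        rw [Matrix.mulVec_mulVec]
      rw [h1, h2, ← dotProduct_add, ← Matrix.add_mulVec, hLyapEq,
        Matrix.neg_mulVec, dotProduct_neg]
    rw [hkey]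
    have := hQlb v
    linarith
  have hVpos : ∀ v : EuclideanSpace ℝ (Fin n), 0 ≤ inner (𝕜 := ℝ) v (mulVecE P v) := by
    intro v
    have := hPlb v
    nlinarith [sq_nonneg ‖v‖, hmPpos.le]
  -- unit vector
  set v₀ : EuclideanSpace ℝ (Fin n) := EuclideanSpace.single (0 : Fin n) (1 : ℝ) with hv₀
  have hv₀n : ‖v₀‖ = 1 := by simp [hv₀]
  -- L > 0
  have hLpos : 0 < L := by
    rcases lt_or_eq_of_le hLnn with h | h
    · exact h
    · exfalso
      have hA0 : mulVecE A v₀ = 0 := by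
        have := hA v₀
        rw [← h] at this
        simpa using norm_le_zero_iff.1 (by linarith)
      have hA10 : mulVecE A₁ v₀ = 0 := by
        have := hA1 v₀
        rw [← h] at this
        simpa using norm_le_zero_iff.1 (by linarith)
      have h2 := hLyap v₀
      rw [hA0, hA10, add_zero, inner_zero_left] at h2
      have h3 : mulVecE P (0 : EuclideanSpace ℝ (Fin n)) = 0 :=
        (Matrix.toEuclideanCLM (𝕜 := ℝ) P).map_zero
      rw [h3, inner_zero_right, hv₀n] at h2
      nlinarith
  -- σP > 0
  have hσPpos : 0 < σP := by
    have h1 := hPlb v₀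
    have h2 : inner (𝕜 := ℝ) v₀ (mulVecE P v₀) ≤ ‖v₀‖ * ‖mulVecE P v₀‖ := real_inner_le_norm _ _
    have h3 := hPub v₀
    rw [hv₀n] at h1 h2 h3
    nlinarith
  -- σQ ≤ 2 σP L
  have hσQub : σQ ≤ 2 * σP * L := by
    have h1 := hLyap v₀
    have hBn : ‖mulVecE A v₀ + mulVecE A₁ v₀‖ ≤ L := by
      have h0 := norm_add_le (mulVecE A v₀) (mulVecE A₁ v₀)
      have h2 := norm_mulVecE_le A v₀; have h3 := norm_mulVecE_le A₁ v₀
      rw [hv₀n] at h2 h3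
      rw [hLdef]
      linarith
    have h4 : -(‖mulVecE A v₀ + mulVecE A₁ v₀‖ * ‖mulVecE P v₀‖)
        ≤ inner (𝕜 := ℝ) (mulVecE A v₀ + mulVecE A₁ v₀) (mulVecE P v₀) :=
      neg_le_of_neg_le (by linarith [neg_abs_le (inner (𝕜 := ℝ) (mulVecE A v₀ + mulVecE A₁ v₀) (mulVecE P v₀)), abs_real_inner_le_norm (mulVecE A v₀ + mulVecE A₁ v₀) (mulVecE P v₀)])
    have h5 : -(‖v₀‖ * ‖mulVecE P (mulVecE A v₀ + mulVecE A₁ v₀)‖)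
        ≤ inner (𝕜 := ℝ) v₀ (mulVecE P (mulVecE A v₀ + mulVecE A₁ v₀)) := by
      linarith [neg_abs_le (inner (𝕜 := ℝ) v₀ (mulVecE P (mulVecE A v₀ + mulVecE A₁ v₀))), abs_real_inner_le_norm v₀ (mulVecE P (mulVecE A v₀ + mulVecE A₁ v₀))]
    have h6 := hPub v₀
    have h7 := hPub (mulVecE A v₀ + mulVecE A₁ v₀)
    have h8 : ‖mulVecE P (mulVecE A v₀ + mulVecE A₁ v₀)‖ ≤ σP * L := by
      calc ‖mulVecE P (mulVecE A v₀ + mulVecE A₁ v₀)‖ ≤ σP * ‖mulVecE A v₀ + mulVecE A₁ v₀‖ := h7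
        _ ≤ σP * L := mul_le_mul_of_nonneg_left hBn hσPpos.le
    rw [hv₀n] at h1 h5 h6
    nlinarith [norm_nonneg (mulVecE P v₀), norm_nonneg (mulVecE A v₀ + mulVecE A₁ v₀), mul_le_mul hBn h6 (norm_nonneg _) hLnn]
  clear_value L σP
  -- numeric bounds on Δ
  have hΔ2 : 432 * σP * L ^ 2 * Δ ≤ σQ := by
    have hden : 0 < σP * L ^ 2 := by positivity
    rw [le_div_iff₀ hden] at hΔle
    nlinarith [hΔle]
  have hLΔ : L * Δ ≤ 1 / 6 := by
    nlinarith [mul_pos hσPpos hLpos, mul_pos (mul_pos hσPpos hLpos) hΔpos]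
  -- per-interval conclusions
  have hkey : ∀ k : ℕ,
      (∀ s ∈ Set.Icc (t k) (t (k + 1)), ‖x s‖ ≤ 3 * ‖x (t k)‖) ∧
        inner (𝕜 := ℝ) (x (t (k + 1))) (mulVecE P (x (t (k + 1)))) ≤
          inner (𝕜 := ℝ) (x (t k)) (mulVecE P (x (t k)))
            * Real.exp (-(σQ / (18 * σP) * (t (k + 1) - t k))) := by
    intro k
    exact key_interval A A₁ P L σP σQ hLpos hσPpos hσQpos hA hA1 hPub hPsym hLyap hVpos
      Δ hΔpos hLΔ hΔ2 (t k) (t (k + 1)) (htmono (Nat.lt_succ_self k)) (htstep k) x (hxder k)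
  set α : ℝ := σQ / (18 * σP) with hα
  have hαpos : 0 < α := by positivity
  set V : EuclideanSpace ℝ (Fin n) → ℝ := fun v => inner (𝕜 := ℝ) v (mulVecE P v) with hV
  set V0 : ℝ := V (x (t 0)) with hV0
  have hV0nn : 0 ≤ V0 := hVpos _
  have hVdecay : ∀ k : ℕ, V (x (t k)) ≤ V0 * Real.exp (-(α * t k)) := by
    intro k
    induction k with
    | zero => rw [hV0, ht0]; simp
    | succ k ih =>
      calc V (x (t (k + 1))) ≤ V (x (t k)) * Real.exp (-(α * (t (k + 1) - t k))) := (hkey k).2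
        _ ≤ (V0 * Real.exp (-(α * t k))) * Real.exp (-(α * (t (k + 1) - t k))) :=
            mul_le_mul_of_nonneg_right ih (Real.exp_pos _).le
        _ = V0 * Real.exp (-(α * t (k + 1))) := by
            rw [mul_assoc, ← Real.exp_add,
              show -(α * t k) + -(α * (t (k + 1) - t k)) = -(α * t (k + 1)) from by ring]
  -- cover of [0, ∞) by sampling intervals
  have hcover : ∀ s : ℝ, 0 ≤ s → ∃ k, t k ≤ s ∧ s ≤ t (k + 1) := by
    intro s hs
    classical
    have hex : ∃ m, s < t m := (httop.eventually_gt_atTop s).exists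
    have hm : s < t (Nat.find hex) := Nat.find_spec hex
    have hm0 : Nat.find hex ≠ 0 := by
      intro h; rw [h, ht0] at hm; exact absurd hm (not_lt.2 hs)
    obtain ⟨k, hk⟩ := Nat.exists_eq_succ_of_ne_zero hm0
    rw [hk] at hm
    have hkm : ¬ s < t k := Nat.find_min hex (by omega)
    exact ⟨k, not_lt.1 hkm, hm.le⟩
  -- exponential bound on the solution
  set C : ℝ := 9 * V0 * Real.exp (α * Δ) / mP with hC
  have hmain : ∀ s : ℝ, 0 ≤ s → ‖x s‖ ^ 2 ≤ C * Real.exp (-(α * s)) := by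
    intro s hs
    obtain ⟨k, hk1, hk2⟩ := hcover s hs
    have h1 : ‖x s‖ ≤ 3 * ‖x (t k)‖ := (hkey k).1 s ⟨hk1, hk2⟩
    have h2 : mP * ‖x (t k)‖ ^ 2 ≤ V (x (t k)) := hPlb _
    have h3 := hVdecay k
    have h4 : s - Δ ≤ t k := by linarith [htstep k]
    have h5 : Real.exp (-(α * t k)) ≤ Real.exp (α * Δ) * Real.exp (-(α * s)) := by
      rw [← Real.exp_add]
      apply Real.exp_le_exp.2
      nlinarith [hαpos.le]
    have h6 : ‖x s‖ ^ 2 ≤ 9 * ‖x (t k)‖ ^ 2 := by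
      nlinarith [norm_nonneg (x s), norm_nonneg (x (t k))]
    rw [hC, div_mul_eq_mul_div, le_div_iff₀ hmPpos]
    have h7 : V (x (t k)) ≤ V0 * (Real.exp (α * Δ) * Real.exp (-(α * s))) := by
      calc V (x (t k)) ≤ V0 * Real.exp (-(α * t k)) := h3
        _ ≤ V0 * (Real.exp (α * Δ) * Real.exp (-(α * s))) :=
            mul_le_mul_of_nonneg_left h5 hV0nn
    nlinarith [h6, h2, h7, hmPpos]
  -- conclude
  have htail : Filter.Tendsto (fun s : ℝ => C * Real.exp (-(α * s))) atTop (nhds 0) := by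
    have h1 : Filter.Tendsto (fun s : ℝ => α * s) atTop atTop :=
      Filter.Tendsto.const_mul_atTop hαpos tendsto_id
    have h2 : Filter.Tendsto (fun s : ℝ => -(α * s)) atTop atBot :=
      Filter.tendsto_neg_atBot_iff.2 h1
    have h3 := Real.tendsto_exp_atBot.comp h2
    have h4 := h3.const_mul C
    simpa using h4
  have hnorm2 : Filter.Tendsto (fun s => ‖x s‖ ^ 2) atTop (nhds 0) := by
    apply squeeze_zero' (Filter.Eventually.of_forall fun s => sq_nonneg _)
      ((eventually_ge_atTop (0:ℝ)).mono hmain) htail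
  have hnorm : Filter.Tendsto (fun s => ‖x s‖) atTop (nhds 0) := by
    have h2 := (Real.continuous_sqrt.tendsto 0).comp hnorm2
    rw [Real.sqrt_zero] at h2
    have h3 : (fun s => Real.sqrt (‖x s‖ ^ 2)) = fun s => ‖x s‖ := by
      funext s; exact Real.sqrt_sq (norm_nonneg _)
    rwa [show (Real.sqrt ∘ fun s => ‖x s‖ ^ 2) = fun s => ‖x s‖ from by
      funext s; exact Real.sqrt_sq (norm_nonneg _)] at h2
  exact tendsto_zero_iff_norm_tendsto_zero.2 hnorm
end

section
/- There exist absolute constants c' > 0 and d > 1 with the following property. Let A, A₁ be n×n real matrices, let P be a symmetric positive definite n×n matrix and Q a symmetric positive definite n×n matrix satisfying (A + A₁)ᵀP + P(A + A₁) = −Q, and set V(y) = yᵀ P y. If Δ > 0 satisfies Δ ≤ c' · σ_min(Q) / (σ_max(P) · (σ_max(A) + σ_max(A₁))²), then for every interval [t_k, t_{k+1}] with t_{k+1} − t_k ≤ Δ and every continuous x : [t_k, t_{k+1}] → ℝⁿ differentiable with derivative ẋ(t) = A x(t) + A₁ x(t_k) on the interval, one has, for all t ∈ [t_k, t_{k+1}],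 V(x(t)) − V(x(t_k)) ≤ −(t − t_k) · (σ_min(Q)/d) · ‖x(t_k)‖₂ · sup_{s ∈ [t_k, t_{k+1}]} ‖x(s)‖₂. -/
open Matrix Filter

namespace AuxLyap
variable {n : ℕ}

lemma mulVecE_eq (M : Matrix (Fin n) (Fin n) ℝ) (x : EuclideanSpace ℝ (Fin n)) :
    mulVecE M x = Matrix.toEuclideanCLM (𝕜 := ℝ) M x := rfl

lemma norm_mulVecE_le (M : Matrix (Fin n) (Fin n) ℝ) (x : EuclideanSpace ℝ (Fin n)) :
    ‖mulVecE M x‖ ≤ sigmaMax M * ‖x‖ := by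
  rw [mulVecE_eq]; exact (Matrix.toEuclideanCLM (𝕜 := ℝ) M).le_opNorm x

lemma inner_mulVecE_transpose (M : Matrix (Fin n) (Fin n) ℝ) (x y : EuclideanSpace ℝ (Fin n)) :
    inner (𝕜 := ℝ) (mulVecE M x) y = inner (𝕜 := ℝ) x (mulVecE Mᵀ y) := by
  have h3 : star M = Mᵀ := by
    rw [Matrix.star_eq_conjTranspose]; ext i j; rfl
  have h2 : (Matrix.toEuclideanCLM (𝕜 := ℝ) Mᵀ) =
      ContinuousLinearMap.adjoint (Matrix.toEuclideanCLM (𝕜 := ℝ) M) := by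
    rw [← ContinuousLinearMap.star_eq_adjoint, ← map_star, h3]
  show inner (𝕜 := ℝ) (Matrix.toEuclideanCLM (𝕜 := ℝ) M x) y = _
  rw [mulVecE_eq, h2, ContinuousLinearMap.adjoint_inner_right]

lemma mulVecE_add (M N : Matrix (Fin n) (Fin n) ℝ) (x : EuclideanSpace ℝ (Fin n)) :
    mulVecE (M + N) x = mulVecE M x + mulVecE N x := by
  simp only [mulVecE_eq, map_add]; rfl

lemma mulVecE_neg (M : Matrix (Fin n) (Fin n) ℝ) (x : EuclideanSpace ℝ (Fin n)) :
    mulVecE (-M) x = -(mulVecE M x) := by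
  simp only [mulVecE_eq, map_neg]; rfl

lemma mulVecE_mul (M N : Matrix (Fin n) (Fin n) ℝ) (x : EuclideanSpace ℝ (Fin n)) :
    mulVecE (M * N) x = mulVecE M (mulVecE N x) := by
  simp only [mulVecE_eq, _root_.map_mul, ContinuousLinearMap.mul_apply]

lemma mulVecE_apply_add (M : Matrix (Fin n) (Fin n) ℝ) (x y : EuclideanSpace ℝ (Fin n)) :
    mulVecE M (x + y) = mulVecE M x + mulVecE M y := by
  simp only [mulVecE_eq, map_add]

lemma mulVecE_apply_smul (M : Matrix (Fin n) (Fin n) ℝ) (c : ℝ) (x : EuclideanSpace ℝ (Fin n)) :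
    mulVecE M (c • x) = c • mulVecE M x := by
  simp only [mulVecE_eq, _root_.map_smul]

lemma mulVecE_apply_sub (M : Matrix (Fin n) (Fin n) ℝ) (x y : EuclideanSpace ℝ (Fin n)) :
    mulVecE M (x - y) = mulVecE M x - mulVecE M y := by
  simp only [mulVecE_eq, map_sub]

/-- key quadratic-form identity when `Pᵀ = P`. -/
lemma quad_identity {P : Matrix (Fin n) (Fin n) ℝ} (hP : Pᵀ = P)
    (B : Matrix (Fin n) (Fin n) ℝ) (z : EuclideanSpace ℝ (Fin n)) :
    inner (𝕜 := ℝ) z (mulVecE (Bᵀ * P + P * B) z) =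
      2 * inner (𝕜 := ℝ) (mulVecE B z) (mulVecE P z) := by
  rw [mulVecE_add, inner_add_right, mulVecE_mul, mulVecE_mul]
  have h1 : inner (𝕜 := ℝ) z (mulVecE Bᵀ (mulVecE P z)) =
      inner (𝕜 := ℝ) (mulVecE B z) (mulVecE P z) := by
    rw [← inner_mulVecE_transpose]
  have h2 : inner (𝕜 := ℝ) z (mulVecE P (mulVecE B z)) =
      inner (𝕜 := ℝ) (mulVecE B z) (mulVecE P z) := by
    rw [real_inner_comm, inner_mulVecE_transpose, hP]
  rw [h1, h2]; ring

lemma rayleigh_pos {Q : Matrix (Fin n) (Fin n) ℝ} (hQ : Q.PosDef)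
    {u : EuclideanSpace ℝ (Fin n)} (hu : u ≠ 0) :
    0 < inner (𝕜 := ℝ) u (mulVecE Q u) := by
  have := hQ.dotProduct_mulVec_pos (x := WithLp.ofLp u) (by simpa using hu)
  simp only [PiLp.inner_apply, RCLike.inner_apply, conj_trivial]
  refine lt_of_lt_of_eq this ?_
  simp [mulVecE, dotProduct, mul_comm]

lemma bddBelow_rayleigh {Q : Matrix (Fin n) (Fin n) ℝ} (hQ : Q.PosDef) :
    BddBelow {r : ℝ | ∃ x : EuclideanSpace ℝ (Fin n), ‖x‖ = 1 ∧
      inner (𝕜 := ℝ) x (mulVecE Q x) = r} := by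
  refine ⟨0, fun r hr => ?_⟩
  obtain ⟨u, hu, rfl⟩ := hr
  have : u ≠ 0 := fun h => by simp [h] at hu
  exact (rayleigh_pos hQ this).le

lemma sigmaMin_le_rayleigh {Q : Matrix (Fin n) (Fin n) ℝ} (hQ : Q.PosDef)
    {u : EuclideanSpace ℝ (Fin n)} (hu : ‖u‖ = 1) :
    sigmaMin Q ≤ inner (𝕜 := ℝ) u (mulVecE Q u) :=
  csInf_le (bddBelow_rayleigh hQ) ⟨u, hu, rfl⟩

lemma sigmaMin_mul_sq_le {Q : Matrix (Fin n) (Fin n) ℝ} (hQ : Q.PosDef)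
    (z : EuclideanSpace ℝ (Fin n)) :
    sigmaMin Q * ‖z‖ ^ 2 ≤ inner (𝕜 := ℝ) z (mulVecE Q z) := by
  rcases eq_or_ne z 0 with rfl | hz
  · simp
  · set u : EuclideanSpace ℝ (Fin n) := ‖z‖⁻¹ • z with hu_def
    have hnz : (0:ℝ) < ‖z‖ := norm_pos_iff.2 hz
    have hu : ‖u‖ = 1 := by
      rw [hu_def, norm_smul]; field_simp
      rw [norm_div, norm_one, norm_norm, mul_one_div_cancel hnz.ne']
    have h := sigmaMin_le_rayleigh hQ hu
    have hval : inner (𝕜 := ℝ) u (mulVecE Q u) = ‖z‖⁻¹ ^ 2 * inner (𝕜 := ℝ) z (mulVecE Q z) := by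
      rw [hu_def, mulVecE_apply_smul, real_inner_smul_left, real_inner_smul_right]; ring
    rw [hval] at h
    have h2 := mul_le_mul_of_nonneg_left h (le_of_lt (by positivity : (0:ℝ) < ‖z‖ ^ 2))
    calc sigmaMin Q * ‖z‖ ^ 2 = ‖z‖ ^ 2 * sigmaMin Q := by ring
    _ ≤ ‖z‖ ^ 2 * (‖z‖⁻¹ ^ 2 * inner (𝕜 := ℝ) z (mulVecE Q z)) := h2
    _ = inner (𝕜 := ℝ) z (mulVecE Q z) := by field_simp

end AuxLyap

lemma final_arith {sq nz nw M dlt cr : ℝ} (hq : 0 < sq) (hnz : 0 ≤ nz) (hnw : 0 ≤ nw)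
    (h2 : nz ≤ M) (h3 : nw ≤ M) (h4 : 0 ≤ dlt) (h5 : dlt ≤ M / 16)
    (h6 : nw ≤ nz + dlt) (h7 : M ≤ nw + dlt)
    (h8 : cr ≤ 1 / 32 * sq * M * M) :
    -(sq * nz ^ 2) + 2 * cr ≤ -(sq / 2 * (nw * M)) := by
  have hM0 : 0 ≤ M := le_trans hnw h3
  have hp1 : nw ^ 2 ≤ (nz + dlt) ^ 2 := by nlinarith
  have h15 : 15 / 16 * M ≤ nw := by linarith
  have t1 := mul_le_mul_of_nonneg_left hp1 hq.le
  have t2 := mul_le_mul_of_nonneg_left (mul_le_mul h2 h5 h4 hM0) hq.le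
  have t3 := mul_le_mul_of_nonneg_left (mul_le_mul h5 h5 h4 (by linarith : (0:ℝ) ≤ M / 16)) hq.le
  have t5 := mul_le_mul_of_nonneg_left (mul_le_mul_of_nonneg_right h15 hnw) hq.le
  have t6 := mul_le_mul_of_nonneg_left (mul_le_mul_of_nonneg_right h15 hM0) hq.le
  nlinarith [t1, t2, t3, t5, t6]

set_option maxHeartbeats 1000000 in
/-- under the hold-length bound, the Lyapunov function `V(y) = yᵀ P y`
has a sufficient decrease along the trajectory within a holding period. -/
theorem lyapunov_sufficient_decrease :
    ∃ c' d : ℝ, 0 < c' ∧ 1 < d ∧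
      ∀ (n : ℕ) (A A₁ P Q : Matrix (Fin n) (Fin n) ℝ),
        P.PosDef → Q.PosDef →
        (A + A₁)ᵀ * P + P * (A + A₁) = -Q →
        ∀ Δ : ℝ, 0 < Δ →
          Δ ≤ c' * sigmaMin Q / (sigmaMax P * (sigmaMax A + sigmaMax A₁) ^ 2) →
          ∀ tk tk1 : ℝ, tk ≤ tk1 → tk1 - tk ≤ Δ →
          ∀ x : ℝ → EuclideanSpace ℝ (Fin n),
            ContinuousOn x (Set.Icc tk tk1) →
            (∀ s ∈ Set.Icc tk tk1,
              HasDerivWithinAt x (mulVecE A (x s) + mulVecE A₁ (x tk)) (Set.Icc tk tk1) s) →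
            ∀ t ∈ Set.Icc tk tk1,
              (inner (𝕜 := ℝ) (x t) (mulVecE P (x t)) : ℝ) -
                  (inner (𝕜 := ℝ) (x tk) (mulVecE P (x tk)) : ℝ) ≤
                -(t - tk) * (sigmaMin Q / d) *
                  ‖x tk‖ * sSup ((fun s => ‖x s‖) '' Set.Icc tk tk1) := by
    classical
  refine ⟨1/32, 2, by norm_num, by norm_num, ?_⟩
  intro n A A₁ P Q hP hQ hPQ Δ hΔ hΔle tk tk1 htk htkΔ x hxc hx' t ht
  open AuxLyap in
  set σp := sigmaMax P with hσp_def
  set σq := sigmaMin Q with hσq_def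
  set σa := sigmaMax A + sigmaMax A₁ with hσa_def
  have hσA : (0:ℝ) ≤ sigmaMax A := norm_nonneg _
  have hσA₁ : (0:ℝ) ≤ sigmaMax A₁ := norm_nonneg _
  have hσp0 : (0:ℝ) ≤ σp := norm_nonneg _
  have hσa0 : (0:ℝ) ≤ σa := by rw [hσa_def]; positivity
  -- denominator positive
  have hden : 0 < σp * σa ^ 2 := by
    rcases (lt_or_eq_of_le (by positivity : (0:ℝ) ≤ σp * σa ^ 2)) with h | h
    · exact h
    · rw [← h, div_zero] at hΔle; linarith
  have hσp : 0 < σp := by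
    by_contra h
    push_neg at h
    have : σp = 0 := le_antisymm h hσp0
    rw [this] at hden; simp at hden
  have hσa : 0 < σa := by
    by_contra h
    push_neg at h
    have : σa = 0 := le_antisymm h hσa0
    rw [this] at hden; simp at hden
  have hq : 0 < σq := by
    have h1 : 0 < 1 / 32 * σq / (σp * σa ^ 2) := lt_of_lt_of_le hΔ hΔle
    rw [div_pos_iff] at h1
    rcases h1 with ⟨h1, _⟩ | ⟨_, h2⟩
    · linarith
    · linarith
  have hkey : Δ * (σp * σa ^ 2) ≤ 1 / 32 * σq := (le_div_iff₀ hden).mp hΔle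
  have hPsymm : Pᵀ = P := by
    have h := hP.1
    ext i j
    have := congrFun (congrFun h i) j
    simpa [Matrix.conjTranspose_apply] using this
  have hQeq : Q = -((A + A₁)ᵀ * P + P * (A + A₁)) := by rw [hPQ, neg_neg]
  -- a unit vector exists since σp > 0
  obtain ⟨v, hv⟩ : ∃ v : EuclideanSpace ℝ (Fin n), v ≠ 0 := by
    by_contra h
    push_neg at h
    have hz : Matrix.toEuclideanCLM (𝕜 := ℝ) P = 0 := by
      ext1 v
      rw [h v]
      simp
    rw [hσp_def, sigmaMax, hz, norm_zero] at hσp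
    exact lt_irrefl _ hσp
  obtain ⟨u, hu⟩ : ∃ u : EuclideanSpace ℝ (Fin n), ‖u‖ = 1 :=
    ⟨‖v‖⁻¹ • v, by
      rw [norm_smul, norm_inv, norm_norm, inv_mul_cancel₀ (norm_ne_zero_iff.2 hv)]⟩
  -- σq ≤ 2 σp σa
  have hBle : sigmaMax (A + A₁) ≤ σa := by
    have hadd : Matrix.toEuclideanCLM (𝕜 := ℝ) (n := Fin n) (A + A₁) =
        Matrix.toEuclideanCLM (𝕜 := ℝ) (n := Fin n) A +
          Matrix.toEuclideanCLM (𝕜 := ℝ) (n := Fin n) A₁ := map_add _ _ _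
    rw [hσa_def, sigmaMax, hadd]
    exact norm_add_le _ _
  have hqle : σq ≤ 2 * (σp * σa) := by
    have h1 := AuxLyap.sigmaMin_le_rayleigh hQ hu
    have h2 : (inner (𝕜 := ℝ) u (mulVecE Q u) : ℝ) =
        -(2 * inner (𝕜 := ℝ) (mulVecE (A + A₁) u) (mulVecE P u)) := by
      rw [hQeq, AuxLyap.mulVecE_neg, inner_neg_right, AuxLyap.quad_identity hPsymm]
    have h3 := abs_real_inner_le_norm (mulVecE (A + A₁) u) (mulVecE P u)
    have h4 := AuxLyap.norm_mulVecE_le (A + A₁) u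
    have h5 := AuxLyap.norm_mulVecE_le P u
    rw [hu, mul_one] at h4 h5
    have h6 : ‖mulVecE (A + A₁) u‖ * ‖mulVecE P u‖ ≤ σa * σp :=
      mul_le_mul (h4.trans hBle) h5 (norm_nonneg _) hσa0
    rw [h2] at h1
    have h8 := abs_le.mp (le_trans h3 h6)
    rw [hσq_def]
    linarith [h8.1, h8.2]
  -- supremum over the interval
  set M := sSup ((fun s => ‖x s‖) '' Set.Icc tk tk1) with hM_def
  have hIne : (Set.Icc tk tk1).Nonempty := ⟨tk, le_refl tk, htk⟩
  have hbdd : BddAbove ((fun s => ‖x s‖) '' Set.Icc tk tk1) :=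
    (isCompact_Icc.image_of_continuousOn hxc.norm).bddAbove
  have hle_M : ∀ s ∈ Set.Icc tk tk1, ‖x s‖ ≤ M := fun s hs =>
    le_csSup hbdd ⟨s, hs, rfl⟩
  have htk_mem : tk ∈ Set.Icc tk tk1 := ⟨le_refl tk, htk⟩
  have hwM : ‖x tk‖ ≤ M := hle_M tk htk_mem
  have hM0 : (0:ℝ) ≤ M := le_trans (norm_nonneg _) hwM
  -- Lipschitz bound
  have hd_bound : ∀ s ∈ Set.Icc tk tk1,
      ‖mulVecE A (x s) + mulVecE A₁ (x tk)‖ ≤ σa * M := by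
    intro s hs
    have h1 := norm_add_le (mulVecE A (x s)) (mulVecE A₁ (x tk))
    have h2 := AuxLyap.norm_mulVecE_le A (x s)
    have h3 := AuxLyap.norm_mulVecE_le A₁ (x tk)
    have h4 := hle_M s hs
    have h5 := hwM
    rw [hσa_def]
    nlinarith [norm_nonneg (x s), norm_nonneg (x tk)]
  set dlt := Δ * (σa * M) with hdlt_def
  have hdlt0 : 0 ≤ dlt := by positivity
  have hlip : ∀ s ∈ Set.Icc tk tk1, ‖x s - x tk‖ ≤ dlt := by
    intro s hs
    have h := norm_image_sub_le_of_norm_deriv_le_segment' hx'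
      (fun r hr => hd_bound r (Set.Ico_subset_Icc_self hr)) s hs
    have h2 : σa * M * (s - tk) ≤ dlt := by
      rw [hdlt_def]
      have hsa : s - tk ≤ Δ := by
        have := hs.2
        linarith
      nlinarith [mul_nonneg hσa0 hM0, hs.1]
    linarith
  -- dlt is small
  have hΔσa : Δ * σa ≤ 1 / 16 := by
    have hps : 0 < σp * σa := mul_pos hσp hσa
    have h1 : Δ * σa * (σp * σa) ≤ 1 / 16 * (σp * σa) := by nlinarith [hkey, hqle]
    exact le_of_mul_le_mul_right h1 hps
  have hdltM : dlt ≤ M / 16 := by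
    rw [hdlt_def]
    nlinarith
  -- M close to ‖x tk‖
  have hMw : M ≤ ‖x tk‖ + dlt := by
    apply csSup_le (hIne.image _)
    rintro r ⟨s, hs, rfl⟩
    have h1 := hlip s hs
    have h2 := norm_sub_norm_le (x s) (x tk)
    linarith
  -- cross term bound
  have hcross : sigmaMax A₁ * σp * dlt ≤ 1 / 32 * σq * M := by
    rw [hdlt_def]
    have hA1a : sigmaMax A₁ ≤ σa := by rw [hσa_def]; linarith
    nlinarith [mul_nonneg (mul_nonneg hσp0 hσa0) hM0, mul_le_mul_of_nonneg_right hkey hM0,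
      mul_nonneg hσA hM0]
  -- derivative of the Lyapunov function along the trajectory
  have hderiv : ∀ s ∈ Set.Icc tk tk1,
      HasDerivWithinAt (fun r => (inner (𝕜 := ℝ) (x r) (mulVecE P (x r)) : ℝ))
        (inner (𝕜 := ℝ) (x s) (mulVecE P (mulVecE A (x s) + mulVecE A₁ (x tk))) +
          inner (𝕜 := ℝ) (mulVecE A (x s) + mulVecE A₁ (x tk)) (mulVecE P (x s)))
        (Set.Icc tk tk1) s := by
    intro s hs
    have hf := hx' s hs
    have hg : HasDerivWithinAt (fun r => mulVecE P (x r))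
        (mulVecE P (mulVecE A (x s) + mulVecE A₁ (x tk))) (Set.Icc tk tk1) s :=
      ((Matrix.toEuclideanCLM (𝕜 := ℝ) P).hasFDerivAt).comp_hasDerivWithinAt s hf
    exact hf.inner ℝ hg
  have hsym : ∀ a b : EuclideanSpace ℝ (Fin n),
      (inner (𝕜 := ℝ) a (mulVecE P b) : ℝ) = inner (𝕜 := ℝ) b (mulVecE P a) := by
    intro a b
    rw [real_inner_comm, AuxLyap.inner_mulVecE_transpose, hPsymm]
  -- pointwise derivative bound
  have hDb : ∀ s ∈ Set.Icc tk tk1,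
      (inner (𝕜 := ℝ) (x s) (mulVecE P (mulVecE A (x s) + mulVecE A₁ (x tk))) : ℝ) +
        (inner (𝕜 := ℝ) (mulVecE A (x s) + mulVecE A₁ (x tk)) (mulVecE P (x s)) : ℝ) ≤
        -(σq / 2 * (‖x tk‖ * M)) := by
    intro s hs
    have hsplit : mulVecE A (x s) + mulVecE A₁ (x tk)
        = mulVecE (A + A₁) (x s) + mulVecE A₁ (x tk - x s) := by
      rw [AuxLyap.mulVecE_add, AuxLyap.mulVecE_apply_sub]
      abel
    have hD : (inner (𝕜 := ℝ) (x s) (mulVecE P (mulVecE A (x s) + mulVecE A₁ (x tk))) : ℝ) +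
        (inner (𝕜 := ℝ) (mulVecE A (x s) + mulVecE A₁ (x tk)) (mulVecE P (x s)) : ℝ)
        = -(inner (𝕜 := ℝ) (x s) (mulVecE Q (x s)) : ℝ) +
          2 * (inner (𝕜 := ℝ) (mulVecE A₁ (x tk - x s)) (mulVecE P (x s)) : ℝ) := by
      have e1 : (inner (𝕜 := ℝ) (x s) (mulVecE P (mulVecE A (x s) + mulVecE A₁ (x tk))) : ℝ)
          = inner (𝕜 := ℝ) (mulVecE A (x s) + mulVecE A₁ (x tk)) (mulVecE P (x s)) :=
        hsym _ _
      have e2 : (inner (𝕜 := ℝ) (mulVecE A (x s) + mulVecE A₁ (x tk)) (mulVecE P (x s)) : ℝ)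
          = (inner (𝕜 := ℝ) (mulVecE (A + A₁) (x s)) (mulVecE P (x s)) : ℝ) +
            (inner (𝕜 := ℝ) (mulVecE A₁ (x tk - x s)) (mulVecE P (x s)) : ℝ) := by
        rw [hsplit]
        exact inner_add_left _ _ _
      have hquad := AuxLyap.quad_identity hPsymm (A + A₁) (x s)
      have hQz : (inner (𝕜 := ℝ) (x s) (mulVecE Q (x s)) : ℝ)
          = -(2 * (inner (𝕜 := ℝ) (mulVecE (A + A₁) (x s)) (mulVecE P (x s)) : ℝ)) := by
        rw [hQeq, AuxLyap.mulVecE_neg, inner_neg_right, hquad]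
      rw [e1, e2, hQz]
      ring
    rw [hD]
    -- bounds
    have hz := hle_M s hs
    have he : ‖x tk - x s‖ ≤ dlt := by
      rw [norm_sub_rev]; exact hlip s hs
    have hq1 : σq * ‖x s‖ ^ 2 ≤ (inner (𝕜 := ℝ) (x s) (mulVecE Q (x s)) : ℝ) := by
      rw [hσq_def]; exact AuxLyap.sigmaMin_mul_sq_le hQ (x s)
    have hq2 : (inner (𝕜 := ℝ) (mulVecE A₁ (x tk - x s)) (mulVecE P (x s)) : ℝ) ≤
        sigmaMax A₁ * dlt * (σp * M) := by
      have h3 := real_inner_le_norm (mulVecE A₁ (x tk - x s)) (mulVecE P (x s))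
      have h4 := AuxLyap.norm_mulVecE_le A₁ (x tk - x s)
      have h5 := AuxLyap.norm_mulVecE_le P (x s)
      have h6 : ‖mulVecE A₁ (x tk - x s)‖ ≤ sigmaMax A₁ * dlt := by
        refine h4.trans ?_
        exact mul_le_mul_of_nonneg_left he hσA₁
      have h7 : ‖mulVecE P (x s)‖ ≤ σp * M := by
        refine h5.trans ?_
        exact mul_le_mul_of_nonneg_left hz hσp0
      refine h3.trans ?_
      exact mul_le_mul h6 h7 (norm_nonneg _) (by positivity)
    have htri : ‖x tk‖ ≤ ‖x s‖ + dlt := by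
      have h8 := norm_sub_norm_le (x tk) (x s)
      linarith
    have hcr : sigmaMax A₁ * dlt * (σp * M) ≤ 1 / 32 * σq * M * M := by
      nlinarith [hcross, hM0]
    have key := final_arith hq (norm_nonneg (x s)) (norm_nonneg (x tk)) hz hwM hdlt0
      hdltM htri hMw (hq2.trans hcr)
    linarith [key, hq1]
  -- integrate the bound via monotonicity
  set K := σq / 2 * (‖x tk‖ * M) with hK_def
  have hanti : AntitoneOn
      (fun r => (inner (𝕜 := ℝ) (x r) (mulVecE P (x r)) : ℝ) + r * K)
      (Set.Icc tk tk1) := by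
    apply antitoneOn_of_deriv_nonpos (convex_Icc tk tk1)
    · apply ContinuousOn.add
      · exact ContinuousOn.inner hxc
          (((Matrix.toEuclideanCLM (𝕜 := ℝ) P).continuous).comp_continuousOn hxc)
      · exact continuousOn_id.mul continuousOn_const
    · intro s hs
      rw [interior_Icc] at hs
      have h1 := (hderiv s (Set.Ioo_subset_Icc_self hs)).hasDerivAt (Icc_mem_nhds hs.1 hs.2)
      exact ((h1.add (hasDerivAt_mul_const K)).differentiableAt).differentiableWithinAt
    · intro s hs
      rw [interior_Icc] at hs
      have h1 := (hderiv s (Set.Ioo_subset_Icc_self hs)).hasDerivAt (Icc_mem_nhds hs.1 hs.2)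
      have h2 := h1.add (hasDerivAt_mul_const K)
      rw [show (fun r => (inner (𝕜 := ℝ) (x r) (mulVecE P (x r)) : ℝ) + r * K) =
        (fun r => (inner (𝕜 := ℝ) (x r) (mulVecE P (x r)) : ℝ)) + (fun r => r * K) from rfl,
        h2.deriv]
      have h3 := hDb s (Set.Ioo_subset_Icc_self hs)
      rw [hK_def] at *
      linarith
  have hmono := hanti htk_mem ht ht.1
  simp only at hmono
  have hfinal : -(t - tk) * (σq / 2) * ‖x tk‖ * M = tk * K - t * K := by
    rw [hK_def]; ring
  rw [hfinal]
  linarith [hmono]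
end

section
/- Let A, A₁ be n×n real matrices and Δ > 0. Suppose there exist n×n real matrices P, U, P₂, P₃ with P symmetric positive definite and U symmetric positive definite, such that, with Φ₁₁ = P₂ᵀ(A + A₁) + (A + A₁)ᵀP₂, the symmetric 2n×2n block matrix with blocks [Φ₁₁, P − P₂ᵀ + (A + A₁)ᵀP₃; (P − P₂ᵀ + (A + A₁)ᵀP₃)ᵀ, −P₃ − P₃ᵀ + Δ·U] is negative definite, and the symmetric 3n×3n block matrix with blocks [Φ₁₁, P − P₂ᵀ + (A + A₁)ᵀP₃, −Δ·P₂ᵀA₁; *, −P₃ − P₃ᵀ, −Δ·P₃ᵀA₁; *, *, −Δ·U] (where * denotes the symmetric completion) is negative definite. Then the sampled-data system determined by (A, A₁, Δ) is asymptotically stable for all variable sampling instants with t_{k+1} − t_k ≤ Δ. -/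
open Matrix Filter

lemma dot_self_eq_normsq {m : Type*} [Fintype m] (y : EuclideanSpace ℝ m) :
    (y : m → ℝ) ⬝ᵥ y = ‖y‖^2 := by
  rw [EuclideanSpace.norm_eq, Real.sq_sqrt (by positivity)]
  simp [dotProduct, sq]

lemma continuous_quadform {m : Type*} [Fintype m] (M : Matrix m m ℝ) :
    Continuous fun y : EuclideanSpace ℝ m => (y : m → ℝ) ⬝ᵥ M.mulVec y := by
  apply continuous_finset_sum
  intro i _
  apply Continuous.mul
  · exact (EuclideanSpace.proj i).continuous
  · apply continuous_finset_sum
    intro j _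
    exact continuous_const.mul (EuclideanSpace.proj j).continuous

lemma exists_neg_quad_bound {m : Type*} [Fintype m] [DecidableEq m] (M : Matrix m m ℝ)
    (h : ∀ y : m → ℝ, y ≠ 0 → y ⬝ᵥ M.mulVec y < 0) :
    ∃ ε > 0, ∀ y : m → ℝ, y ⬝ᵥ M.mulVec y ≤ -ε * (y ⬝ᵥ y) := by
  cases isEmpty_or_nonempty m with
  | inl hm =>
    refine ⟨1, one_pos, fun y => ?_⟩
    simp [dotProduct]
  | inr hm =>
    set f : EuclideanSpace ℝ m → ℝ := fun y => (y : m → ℝ) ⬝ᵥ M.mulVec y with hf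
    have hcont : Continuous f := continuous_quadform M
    have hne : (Metric.sphere (0 : EuclideanSpace ℝ m) 1).Nonempty := by
      refine ⟨EuclideanSpace.single (Classical.arbitrary m) 1, ?_⟩
      simp [EuclideanSpace.norm_single]
    obtain ⟨u, hu, hmax⟩ := (isCompact_sphere (0 : EuclideanSpace ℝ m) 1).exists_isMaxOn hne
      hcont.continuousOn
    have hu1 : ‖u‖ = 1 := by simpa using hu
    have huneg : f u < 0 := by
      apply h
      intro h0
      rw [show u = (0 : EuclideanSpace ℝ m) from by simpa using congrArg (WithLp.toLp 2) h0] at hu1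
      simp at hu1
    have key : ∀ Y : EuclideanSpace ℝ m, f Y ≤ f u * ‖Y‖^2 := by
      intro Y
      by_cases hy : Y = 0
      · simp [hy, hf]
      · have hcpos : 0 < ‖Y‖ := norm_pos_iff.mpr hy
        have hu'1 : ‖(‖Y‖⁻¹ • Y : EuclideanSpace ℝ m)‖ = 1 := by
          rw [norm_smul]
          simp [abs_of_pos (inv_pos.mpr hcpos)]
          exact inv_mul_cancel₀ (ne_of_gt hcpos)
        have hle : f (‖Y‖⁻¹ • Y) ≤ f u := hmax (by simp [hu'1])
        have hscale : f (‖Y‖⁻¹ • Y) = ‖Y‖⁻¹ * ‖Y‖⁻¹ * f Y := by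
          rw [hf]
          show ((‖Y‖⁻¹ • Y) : m → ℝ) ⬝ᵥ M.mulVec ((‖Y‖⁻¹ • Y : m → ℝ)) = _
          rw [smul_dotProduct, mulVec_smul, dotProduct_smul]
          simp [smul_eq_mul]; ring
        rw [hscale] at hle
        have hQ : ‖Y‖^2 * (‖Y‖⁻¹ * ‖Y‖⁻¹ * f Y) = f Y := by
          field_simp
        nlinarith [hle, hcpos, hQ, sq_nonneg ‖Y‖]
    refine ⟨-f u, by linarith, fun y => ?_⟩
    have h1 := key (WithLp.toLp 2 y : EuclideanSpace ℝ m)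
    have h2 : y ⬝ᵥ y = ‖(WithLp.toLp 2 y : EuclideanSpace ℝ m)‖^2 := dot_self_eq_normsq _
    have h3 : f (WithLp.toLp 2 y : EuclideanSpace ℝ m) = y ⬝ᵥ M.mulVec y := rfl
    rw [h3] at h1
    nlinarith [h1, h2]

lemma dot_mulVec_symm {m : Type*} [Fintype m] {S : Matrix m m ℝ} (hS : Sᵀ = S)
    (a c : m → ℝ) : a ⬝ᵥ S.mulVec c = c ⬝ᵥ S.mulVec a := by
  rw [Matrix.dotProduct_mulVec, ← Matrix.mulVec_transpose, hS, dotProduct_comm]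

lemma psd_quad_nonneg {m : Type*} [Fintype m] {M : Matrix m m ℝ} (h : M.PosSemidef)
    (x : m → ℝ) : 0 ≤ x ⬝ᵥ M.mulVec x := by
  simpa using h.dotProduct_mulVec_nonneg x

lemma amgm_U {m : Type*} [Fintype m] [DecidableEq m] (U : Matrix m m ℝ) (hU : U.PosDef)
    (b w : m → ℝ) :
    2 * (b ⬝ᵥ w) ≤ b ⬝ᵥ U⁻¹.mulVec b + w ⬝ᵥ U.mulVec w := by
  have hUs : Uᵀ = U := hU.1
  have hUis : (U⁻¹)ᵀ = U⁻¹ := hU.inv.1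
  have hdet : IsUnit U.det := isUnit_iff_ne_zero.mpr (ne_of_gt hU.det_pos)
  have hUU : U * U⁻¹ = 1 := mul_nonsing_inv U hdet
  have e1 : U.mulVec (U⁻¹.mulVec b) = b := by
    rw [Matrix.mulVec_mulVec, hUU, Matrix.one_mulVec]
  have h0 : 0 ≤ (w - U⁻¹.mulVec b) ⬝ᵥ U.mulVec (w - U⁻¹.mulVec b) := psd_quad_nonneg hU.posSemidef _
  rw [sub_dotProduct, Matrix.mulVec_sub, dotProduct_sub, dotProduct_sub, e1] at h0
  have e2 : (U⁻¹.mulVec b) ⬝ᵥ U.mulVec w = b ⬝ᵥ w := by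
    rw [dot_mulVec_symm hUs, e1, dotProduct_comm]
  have e3 : w ⬝ᵥ b = b ⬝ᵥ w := dotProduct_comm _ _
  have e4 : (U⁻¹.mulVec b) ⬝ᵥ b = b ⬝ᵥ U⁻¹.mulVec b := by
    rw [dotProduct_comm]
  rw [e2, e3, e4] at h0
  linarith

lemma dotProduct_self_nonneg' {m : Type*} [Fintype m] (y : m → ℝ) : 0 ≤ y ⬝ᵥ y :=
  Finset.sum_nonneg fun i _ => mul_self_nonneg (y i)

lemma quad_fromBlocks {m₁ m₂ : Type*} [Fintype m₁] [Fintype m₂]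
    (A : Matrix m₁ m₁ ℝ) (B : Matrix m₁ m₂ ℝ) (C : Matrix m₂ m₁ ℝ) (Dm : Matrix m₂ m₂ ℝ)
    (X : m₁ → ℝ) (D : m₂ → ℝ) :
    Sum.elim X D ⬝ᵥ (Matrix.fromBlocks A B C Dm).mulVec (Sum.elim X D) =
      X ⬝ᵥ A.mulVec X + X ⬝ᵥ B.mulVec D + D ⬝ᵥ C.mulVec X + D ⬝ᵥ Dm.mulVec D := by
  rw [Matrix.fromBlocks_mulVec, sumElim_dotProduct_sumElim, dotProduct_add,
    dotProduct_add, Sum.elim_comp_inl, Sum.elim_comp_inr]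
  ring

lemma dot_mulVec_flip {m₁ m₂ : Type*} [Fintype m₁] [Fintype m₂]
    (M : Matrix m₁ m₂ ℝ) (a : m₁ → ℝ) (b : m₂ → ℝ) :
    a ⬝ᵥ M.mulVec b = (Mᵀ.mulVec a) ⬝ᵥ b := by
  rw [Matrix.dotProduct_mulVec, ← Matrix.mulVec_transpose]

lemma key_bound {n : ℕ} (A A₁ : Matrix (Fin n) (Fin n) ℝ)
    (Δ : ℝ) (hΔ : 0 < Δ)
    (P U P₂ P₃ : Matrix (Fin n) (Fin n) ℝ) (hU : U.PosDef)
    (hLMI1 : ∀ y : Fin n ⊕ Fin n → ℝ, y ≠ 0 →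
      y ⬝ᵥ (Matrix.fromBlocks
          (P₂ᵀ * (A + A₁) + (A + A₁)ᵀ * P₂)
          (P - P₂ᵀ + (A + A₁)ᵀ * P₃)
          (P - P₂ᵀ + (A + A₁)ᵀ * P₃)ᵀ
          (-P₃ - P₃ᵀ + Δ • U)).mulVec y < 0)
    (hLMI2 : ∀ y : (Fin n ⊕ Fin n) ⊕ Fin n → ℝ, y ≠ 0 →
      y ⬝ᵥ (Matrix.fromBlocks
          (Matrix.fromBlocks
            (P₂ᵀ * (A + A₁) + (A + A₁)ᵀ * P₂)
            (P - P₂ᵀ + (A + A₁)ᵀ * P₃)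
            (P - P₂ᵀ + (A + A₁)ᵀ * P₃)ᵀ
            (-P₃ - P₃ᵀ))
          (Matrix.fromRows (-(Δ • (P₂ᵀ * A₁))) (-(Δ • (P₃ᵀ * A₁))))
          (Matrix.fromCols (-(Δ • (P₂ᵀ * A₁)))ᵀ (-(Δ • (P₃ᵀ * A₁)))ᵀ)
          (-(Δ • U))).mulVec y < 0) :
    ∃ ε > 0, ∀ X D : Fin n → ℝ, ∀ τ ρ : ℝ, 0 ≤ τ → 0 ≤ ρ → τ + ρ ≤ Δ →
      Sum.elim X D ⬝ᵥ (Matrix.fromBlocks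
          (P₂ᵀ * (A + A₁) + (A + A₁)ᵀ * P₂)
          (P - P₂ᵀ + (A + A₁)ᵀ * P₃)
          (P - P₂ᵀ + (A + A₁)ᵀ * P₃)ᵀ
          (-P₃ - P₃ᵀ)).mulVec (Sum.elim X D)
        + ρ * (D ⬝ᵥ U.mulVec D)
        + τ * (((P₂ᵀ * A₁)ᵀ.mulVec X + (P₃ᵀ * A₁)ᵀ.mulVec D) ⬝ᵥ
            U⁻¹.mulVec ((P₂ᵀ * A₁)ᵀ.mulVec X + (P₃ᵀ * A₁)ᵀ.mulVec D))
        ≤ -ε * (X ⬝ᵥ X + D ⬝ᵥ D) := by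
  classical
  set F := A + A₁ with hF
  set Φ11 := P₂ᵀ * F + Fᵀ * P₂ with hΦ11
  set Φ12 := P - P₂ᵀ + Fᵀ * P₃ with hΦ12
  set G₂ := P₂ᵀ * A₁ with hG₂
  set G₃ := P₃ᵀ * A₁ with hG₃
  set M₀ := Matrix.fromBlocks Φ11 Φ12 Φ12ᵀ (-P₃ - P₃ᵀ) with hM₀
  set Bmat := Matrix.fromRows G₂ G₃ with hBmat
  set Q2 := M₀ + Δ • (Bmat * U⁻¹ * Bmatᵀ) with hQ2
  have hUs : Uᵀ = U := hU.1
  have hUis : (U⁻¹)ᵀ = U⁻¹ := hU.inv.1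
  have hdet : IsUnit U.det := isUnit_iff_ne_zero.mpr (ne_of_gt hU.det_pos)
  have hUU : U * U⁻¹ = 1 := mul_nonsing_inv U hdet
  -- Q2 is negative definite
  have hQ2neg : ∀ ζ : Fin n ⊕ Fin n → ℝ, ζ ≠ 0 → ζ ⬝ᵥ Q2.mulVec ζ < 0 := by
    intro ζ hζ
    set c := Bmatᵀ.mulVec ζ with hc
    set u := -(U⁻¹.mulVec c) with hu
    have hy : Sum.elim ζ u ≠ 0 := by
      intro h0
      apply hζ
      funext i
      exact congrFun h0 (Sum.inl i)
    have h2 := hLMI2 (Sum.elim ζ u) hy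
    rw [quad_fromBlocks] at h2
    have eTR : Matrix.fromRows (-(Δ • G₂)) (-(Δ • G₃)) = -(Δ • Bmat) := by
      ext i j
      cases i <;> simp [hBmat, Matrix.fromRows_apply_inl, Matrix.fromRows_apply_inr]
    have eBL : Matrix.fromCols (-(Δ • G₂))ᵀ (-(Δ • G₃))ᵀ = (-(Δ • Bmat))ᵀ := by
      rw [← Matrix.transpose_fromRows, eTR]
    rw [eTR, eBL] at h2
    have eU1 : U.mulVec (U⁻¹.mulVec c) = c := by
      rw [Matrix.mulVec_mulVec, hUU, Matrix.one_mulVec]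
    have e2 : ζ ⬝ᵥ (-(Δ • Bmat)).mulVec u = Δ * (c ⬝ᵥ U⁻¹.mulVec c) := by
      rw [Matrix.neg_mulVec, dotProduct_neg, Matrix.smul_mulVec, dotProduct_smul,
        dot_mulVec_flip, ← hc, hu]
      simp [smul_eq_mul]
    have e3 : u ⬝ᵥ ((-(Δ • Bmat))ᵀ).mulVec ζ = Δ * (c ⬝ᵥ U⁻¹.mulVec c) := by
      rw [Matrix.transpose_neg, Matrix.transpose_smul, Matrix.neg_mulVec, dotProduct_neg,
        Matrix.smul_mulVec, dotProduct_smul, ← hc, hu]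
      simp [smul_eq_mul, dotProduct_neg, neg_dotProduct]
      rw [dotProduct_comm]
      exact Or.inl rfl
    have e4 : u ⬝ᵥ (-(Δ • U)).mulVec u = -(Δ * (c ⬝ᵥ U⁻¹.mulVec c)) := by
      rw [Matrix.neg_mulVec, dotProduct_neg, Matrix.smul_mulVec, dotProduct_smul, hu]
      simp only [Matrix.mulVec_neg, dotProduct_neg, neg_dotProduct, neg_neg, smul_eq_mul]
      rw [dot_mulVec_symm hUs, eU1, dotProduct_comm]
    rw [e2, e3, e4] at h2
    have eq2 : ζ ⬝ᵥ Q2.mulVec ζ =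
        ζ ⬝ᵥ M₀.mulVec ζ + Δ * (c ⬝ᵥ U⁻¹.mulVec c) := by
      rw [hQ2, Matrix.add_mulVec, dotProduct_add, Matrix.smul_mulVec, dotProduct_smul]
      congr 1
      rw [smul_eq_mul]
      congr 1
      rw [Matrix.mul_assoc, ← Matrix.mulVec_mulVec, ← Matrix.mulVec_mulVec,
        dot_mulVec_flip, ← hc]
    rw [eq2]
    linarith
  obtain ⟨ε₁, hε₁, hb1⟩ := exists_neg_quad_bound _ hLMI1
  obtain ⟨ε₂, hε₂, hb2⟩ := exists_neg_quad_bound _ hQ2neg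
  refine ⟨min ε₁ ε₂, lt_min hε₁ hε₂, fun X D τ ρ hτ hρ hτρ => ?_⟩
  set ζ := Sum.elim X D with hζ
  have hζζ : ζ ⬝ᵥ ζ = X ⬝ᵥ X + D ⬝ᵥ D := sumElim_dotProduct_sumElim _ _ _ _
  set c := (G₂)ᵀ.mulVec X + (G₃)ᵀ.mulVec D with hc
  have hcB : Bmatᵀ.mulVec ζ = c := by
    rw [hBmat, Matrix.transpose_fromRows, hζ, Matrix.fromCols_mulVec_sumElim]
  set q0 := ζ ⬝ᵥ M₀.mulVec ζ with hq0
  set a := D ⬝ᵥ U.mulVec D with ha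
  set γ := c ⬝ᵥ U⁻¹.mulVec c with hγ
  have hann : 0 ≤ a := psd_quad_nonneg hU.posSemidef D
  have hγnn : 0 ≤ γ := psd_quad_nonneg hU.inv.posSemidef c
  have hζnn : 0 ≤ X ⬝ᵥ X + D ⬝ᵥ D := by
    have := dotProduct_self_nonneg' ζ
    rw [hζζ] at this
    exact this
  -- bound 1 : q0 + Δ * a ≤ -ε₁ * |ζ|²
  have hq1 : q0 + Δ * a ≤ -ε₁ * (X ⬝ᵥ X + D ⬝ᵥ D) := by
    have := hb1 ζ
    rw [hζζ] at this
    have e : D ⬝ᵥ (-P₃ - P₃ᵀ + Δ • U).mulVec D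
        = D ⬝ᵥ (-P₃ - P₃ᵀ).mulVec D + Δ * a := by
      rw [Matrix.add_mulVec, dotProduct_add, Matrix.smul_mulVec, dotProduct_smul,
        ha, smul_eq_mul]
    have expand : ζ ⬝ᵥ (Matrix.fromBlocks Φ11 Φ12 Φ12ᵀ (-P₃ - P₃ᵀ + Δ • U)).mulVec ζ
        = q0 + Δ * a := by
      rw [hζ, quad_fromBlocks, hq0, hζ, quad_fromBlocks, e]
      ring
    rw [expand] at this
    exact this
  -- bound 2 : q0 + Δ * γ ≤ -ε₂ * |ζ|²
  have hq2 : q0 + Δ * γ ≤ -ε₂ * (X ⬝ᵥ X + D ⬝ᵥ D) := by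
    have := hb2 ζ
    rw [hζζ] at this
    have expand : ζ ⬝ᵥ Q2.mulVec ζ = q0 + Δ * γ := by
      rw [hQ2, Matrix.add_mulVec, dotProduct_add, Matrix.smul_mulVec, dotProduct_smul]
      congr 1
      rw [smul_eq_mul]
      congr 1
      rw [Matrix.mul_assoc, ← Matrix.mulVec_mulVec, ← Matrix.mulVec_mulVec,
        dot_mulVec_flip, hcB]
    rw [expand] at this
    exact this
  have hgoal : q0 + ρ * a + τ * γ ≤ -(min ε₁ ε₂) * (X ⬝ᵥ X + D ⬝ᵥ D) := by
    rcases le_total a γ with hle | hle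
    · have h1 : ρ * a + τ * γ ≤ Δ * γ := by nlinarith
      have h2 : -ε₂ * (X ⬝ᵥ X + D ⬝ᵥ D) ≤ -(min ε₁ ε₂) * (X ⬝ᵥ X + D ⬝ᵥ D) := by
        have : min ε₁ ε₂ ≤ ε₂ := min_le_right _ _
        nlinarith
      linarith
    · have h1 : ρ * a + τ * γ ≤ Δ * a := by nlinarith
      have h2 : -ε₁ * (X ⬝ᵥ X + D ⬝ᵥ D) ≤ -(min ε₁ ε₂) * (X ⬝ᵥ X + D ⬝ᵥ D) := by
        have : min ε₁ ε₂ ≤ ε₁ := min_le_left _ _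
        nlinarith
      linarith
  exact le_trans (by linarith) hgoal
lemma descriptor_identity {n : ℕ} (A A₁ P P₂ P₃ : Matrix (Fin n) (Fin n) ℝ)
    (X D xa : Fin n → ℝ) (hD : D = A.mulVec X + A₁.mulVec xa) :
    Sum.elim X D ⬝ᵥ (Matrix.fromBlocks
        (P₂ᵀ * (A + A₁) + (A + A₁)ᵀ * P₂)
        (P - P₂ᵀ + (A + A₁)ᵀ * P₃)
        (P - P₂ᵀ + (A + A₁)ᵀ * P₃)ᵀ
        (-P₃ - P₃ᵀ)).mulVec (Sum.elim X D)
      = 2 * (X ⬝ᵥ P.mulVec D)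
        + 2 * (((P₂ᵀ * A₁)ᵀ.mulVec X + (P₃ᵀ * A₁)ᵀ.mulVec D) ⬝ᵥ (X - xa)) := by
  have hFD : A₁.mulVec (X - xa) = (A + A₁).mulVec X - D := by
    rw [hD, Matrix.add_mulVec, Matrix.mulVec_sub]
    abel
  set Fx := (A + A₁).mulVec X with hFx
  set w₂ := P₂.mulVec X with hw₂
  set w₃ := P₃.mulVec D with hw₃
  rw [quad_fromBlocks]
  have a1 : X ⬝ᵥ (P₂ᵀ * (A + A₁)).mulVec X = w₂ ⬝ᵥ Fx := by
    rw [← Matrix.mulVec_mulVec, dot_mulVec_flip, Matrix.transpose_transpose]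
  have a2 : X ⬝ᵥ ((A + A₁)ᵀ * P₂).mulVec X = Fx ⬝ᵥ w₂ := by
    rw [← Matrix.mulVec_mulVec, dot_mulVec_flip, Matrix.transpose_transpose]
  have a3 : X ⬝ᵥ (P - P₂ᵀ + (A + A₁)ᵀ * P₃).mulVec D
      = X ⬝ᵥ P.mulVec D - w₂ ⬝ᵥ D + Fx ⬝ᵥ w₃ := by
    rw [Matrix.add_mulVec, Matrix.sub_mulVec, dotProduct_add, dotProduct_sub,
      ← Matrix.mulVec_mulVec]
    rw [dot_mulVec_flip P₂ᵀ, Matrix.transpose_transpose,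
      dot_mulVec_flip ((A + A₁)ᵀ), Matrix.transpose_transpose]
  have a4 : D ⬝ᵥ ((P - P₂ᵀ + (A + A₁)ᵀ * P₃)ᵀ).mulVec X
      = X ⬝ᵥ P.mulVec D - w₂ ⬝ᵥ D + Fx ⬝ᵥ w₃ := by
    rw [dot_mulVec_flip, Matrix.transpose_transpose, dotProduct_comm, a3]
  have a5 : D ⬝ᵥ (-P₃ - P₃ᵀ).mulVec D = -(D ⬝ᵥ w₃) - (D ⬝ᵥ w₃) := by
    rw [Matrix.sub_mulVec, Matrix.neg_mulVec, dotProduct_sub, dotProduct_neg]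
    rw [dot_mulVec_flip P₃ᵀ, Matrix.transpose_transpose, dotProduct_comm D w₃]
  have hA11 : X ⬝ᵥ (P₂ᵀ * (A + A₁) + (A + A₁)ᵀ * P₂).mulVec X = w₂ ⬝ᵥ Fx + Fx ⬝ᵥ w₂ := by
    rw [Matrix.add_mulVec, dotProduct_add, a1, a2]
  have b1 : (P₂ᵀ * A₁)ᵀ.mulVec X ⬝ᵥ (X - xa) = w₂ ⬝ᵥ Fx - w₂ ⬝ᵥ D := by
    rw [← dot_mulVec_flip, ← Matrix.mulVec_mulVec, dot_mulVec_flip P₂ᵀ,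
      Matrix.transpose_transpose, hFD, dotProduct_sub]
  have b2 : (P₃ᵀ * A₁)ᵀ.mulVec D ⬝ᵥ (X - xa) = w₃ ⬝ᵥ Fx - w₃ ⬝ᵥ D := by
    rw [← dot_mulVec_flip, ← Matrix.mulVec_mulVec, dot_mulVec_flip P₃ᵀ,
      Matrix.transpose_transpose, hFD, dotProduct_sub]
  rw [hA11, a3, a4, a5, add_dotProduct, b1, b2]
  have c1 : Fx ⬝ᵥ w₂ = w₂ ⬝ᵥ Fx := dotProduct_comm _ _
  have c2 : Fx ⬝ᵥ w₃ = w₃ ⬝ᵥ Fx := dotProduct_comm _ _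
  have c3 : w₃ ⬝ᵥ D = D ⬝ᵥ w₃ := dotProduct_comm _ _
  rw [c1, c2, c3]
  ring

lemma inner_eq_dot {m : Type*} [Fintype m] (a b : EuclideanSpace ℝ m) :
    inner (𝕜 := ℝ) a b = (a : m → ℝ) ⬝ᵥ b := by
  simp [PiLp.inner_apply, dotProduct, RCLike.inner_apply, mul_comm]

lemma mulVecE_eq_clm {n : ℕ} (M : Matrix (Fin n) (Fin n) ℝ) (y : EuclideanSpace ℝ (Fin n)) :
    mulVecE M y = Matrix.toEuclideanCLM (𝕜 := ℝ) M y := by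
  apply WithLp.ofLp_injective; simp [mulVecE]

lemma inner_eq_dot' {m : Type*} [Fintype m] (a b : EuclideanSpace ℝ m) :
    inner (𝕜 := ℝ) a b = (a : m → ℝ) ⬝ᵥ b := by
  simp [PiLp.inner_apply, dotProduct, RCLike.inner_apply, mul_comm]


open MeasureTheory Set in
lemma interval_estimate {n : ℕ} {A A₁ P U P₂ P₃ : Matrix (Fin n) (Fin n) ℝ}
    (hPs : Pᵀ = P) (hU : U.PosDef) {Δ ε : ℝ} (hε : 0 < ε)
    (hkey : ∀ X D : Fin n → ℝ, ∀ τ ρ : ℝ, 0 ≤ τ → 0 ≤ ρ → τ + ρ ≤ Δ →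
      Sum.elim X D ⬝ᵥ (Matrix.fromBlocks
          (P₂ᵀ * (A + A₁) + (A + A₁)ᵀ * P₂)
          (P - P₂ᵀ + (A + A₁)ᵀ * P₃)
          (P - P₂ᵀ + (A + A₁)ᵀ * P₃)ᵀ
          (-P₃ - P₃ᵀ)).mulVec (Sum.elim X D)
        + ρ * (D ⬝ᵥ U.mulVec D)
        + τ * (((P₂ᵀ * A₁)ᵀ.mulVec X + (P₃ᵀ * A₁)ᵀ.mulVec D) ⬝ᵥ
            U⁻¹.mulVec ((P₂ᵀ * A₁)ᵀ.mulVec X + (P₃ᵀ * A₁)ᵀ.mulVec D))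
        ≤ -ε * (X ⬝ᵥ X + D ⬝ᵥ D))
    {a b : ℝ} (hab : a < b) (hba : b - a ≤ Δ)
    (x : ℝ → EuclideanSpace ℝ (Fin n))
    (hx : ∀ s ∈ Set.Icc a b, HasDerivWithinAt x
      (mulVecE A (x s) + mulVecE A₁ (x a)) (Set.Icc a b) s) :
    (∀ r ∈ Set.Icc a b,
      (x r : Fin n → ℝ) ⬝ᵥ P.mulVec (x r) ≤ (x a : Fin n → ℝ) ⬝ᵥ P.mulVec (x a)) ∧
    (x b : Fin n → ℝ) ⬝ᵥ P.mulVec (x b)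
        + ε * (∫ s in a..b, (x s : Fin n → ℝ) ⬝ᵥ (x s))
      ≤ (x a : Fin n → ℝ) ⬝ᵥ P.mulVec (x a) := by
  set d : ℝ → EuclideanSpace ℝ (Fin n) :=
    fun s => mulVecE A (x s) + mulVecE A₁ (x a) with hd
  set g : ℝ → ℝ := fun s => (d s : Fin n → ℝ) ⬝ᵥ U.mulVec (d s) with hg
  set q : ℝ → ℝ := fun s => (x s : Fin n → ℝ) ⬝ᵥ (x s) with hq
  have hxc : ContinuousOn x (Icc a b) :=
    fun s hs => ((hx s hs).differentiableWithinAt).continuousWithinAt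
  have hdc : ContinuousOn d (Icc a b) := by
    apply ContinuousOn.add
    · have : (fun s => mulVecE A (x s))
          = fun s => Matrix.toEuclideanCLM (𝕜 := ℝ) A (x s) := funext fun s => mulVecE_eq_clm A (x s)
      rw [this]
      exact (Matrix.toEuclideanCLM (𝕜 := ℝ) A).continuous.comp_continuousOn hxc
    · exact continuousOn_const
  have hgc : ContinuousOn g (Icc a b) := (continuous_quadform U).comp_continuousOn hdc
  have hqc : ContinuousOn q (Icc a b) := by
    have h1 : Continuous fun y : EuclideanSpace ℝ (Fin n) => (y : Fin n → ℝ) ⬝ᵥ y := by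
      simpa [Matrix.one_mulVec] using continuous_quadform (1 : Matrix (Fin n) (Fin n) ℝ)
    exact h1.comp_continuousOn hxc
  have hgnn : ∀ s, 0 ≤ g s := fun s => psd_quad_nonneg hU.posSemidef _
  have hqnn : ∀ s, 0 ≤ q s := fun s => dotProduct_self_nonneg' _
  have hgint : ∀ r ∈ Icc a b, IntervalIntegrable g volume a r := by
    intro r hr
    apply ContinuousOn.intervalIntegrable
    rw [Set.uIcc_of_le hr.1]
    exact hgc.mono (Icc_subset_Icc le_rfl hr.2)
  have hqint : ∀ r ∈ Icc a b, IntervalIntegrable q volume a r := by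
    intro r hr
    apply ContinuousOn.intervalIntegrable
    rw [Set.uIcc_of_le hr.1]
    exact hqc.mono (Icc_subset_Icc le_rfl hr.2)
  set Gg : ℝ → ℝ := fun r => ∫ s in a..r, g s with hGg
  set Gq : ℝ → ℝ := fun r => ∫ s in a..r, q s with hGq
  have hGgc : ContinuousOn Gg (Icc a b) := by
    have := intervalIntegral.continuousOn_primitive_interval
      (f := g) (μ := volume) (a := a) (b := b) ?_
    · rwa [Set.uIcc_of_le hab.le] at this
    · rw [Set.uIcc_of_le hab.le]
      exact hgc.integrableOn_Icc
  have hGqc : ContinuousOn Gq (Icc a b) := by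
    have := intervalIntegral.continuousOn_primitive_interval
      (f := q) (μ := volume) (a := a) (b := b) ?_
    · rwa [Set.uIcc_of_le hab.le] at this
    · rw [Set.uIcc_of_le hab.le]
      exact hqc.integrableOn_Icc
  set qP : ℝ → ℝ := fun r => (x r : Fin n → ℝ) ⬝ᵥ P.mulVec (x r) with hqP
  have hqPc : ContinuousOn qP (Icc a b) := (continuous_quadform P).comp_continuousOn hxc
  set Z : ℝ → ℝ := fun r => qP r + (b - r) * Gg r + ε * Gq r with hZ
  have hZc : ContinuousOn Z (Icc a b) :=
    (hqPc.add ((continuousOn_const.sub continuousOn_id).mul hGgc)).add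
      (continuousOn_const.mul hGqc)
  -- derivative at interior points
  have hder : ∀ r ∈ Ioo a b, HasDerivAt Z
      (2 * ((x r : Fin n → ℝ) ⬝ᵥ P.mulVec (d r)) + ((-1) * Gg r + (b - r) * g r)
        + ε * q r) r := by
    intro r hr
    have hricc : r ∈ Icc a b := Ioo_subset_Icc_self hr
    have hnhds : Icc a b ∈ nhds r := Icc_mem_nhds hr.1 hr.2
    have hxr : HasDerivAt x (d r) r := (hx r hricc).hasDerivAt hnhds
    -- quadratic part
    have hPxr : HasDerivAt (fun u => Matrix.toEuclideanCLM (𝕜 := ℝ) P (x u))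
        (Matrix.toEuclideanCLM (𝕜 := ℝ) P (d r)) r :=
      (Matrix.toEuclideanCLM (𝕜 := ℝ) P).hasFDerivAt.comp_hasDerivAt r hxr
    have hinner : HasDerivAt (fun u => inner (𝕜 := ℝ) (x u)
        (Matrix.toEuclideanCLM (𝕜 := ℝ) P (x u)))
        (inner (𝕜 := ℝ) (x r) (Matrix.toEuclideanCLM (𝕜 := ℝ) P (d r))
          + inner (𝕜 := ℝ) (d r) (Matrix.toEuclideanCLM (𝕜 := ℝ) P (x r))) r :=
      HasDerivAt.inner ℝ hxr hPxr
    have hfun : (fun u => inner (𝕜 := ℝ) (x u) (Matrix.toEuclideanCLM (𝕜 := ℝ) P (x u)))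
        = qP := by
      funext u
      rw [hqP, inner_eq_dot']
      rfl
    have hval : inner (𝕜 := ℝ) (x r) (Matrix.toEuclideanCLM (𝕜 := ℝ) P (d r))
          + inner (𝕜 := ℝ) (d r) (Matrix.toEuclideanCLM (𝕜 := ℝ) P (x r))
        = 2 * ((x r : Fin n → ℝ) ⬝ᵥ P.mulVec (d r)) := by
      rw [inner_eq_dot', inner_eq_dot']
      have h1 : ((Matrix.toEuclideanCLM (𝕜 := ℝ) P (d r)) : Fin n → ℝ)
          = P.mulVec (d r) := rfl
      have h2 : ((Matrix.toEuclideanCLM (𝕜 := ℝ) P (x r)) : Fin n → ℝ)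
          = P.mulVec (x r) := rfl
      rw [h1, h2, dot_mulVec_symm hPs (d r) (x r)]
      ring
    have hqP' : HasDerivAt qP (2 * ((x r : Fin n → ℝ) ⬝ᵥ P.mulVec (d r))) r := by
      rw [← hfun, ← hval]; exact hinner
    -- FTC parts
    have hmeasg : StronglyMeasurableAtFilter g (nhds r) volume :=
      (hgc.mono Ioo_subset_Icc_self).stronglyMeasurableAtFilter isOpen_Ioo r hr
    have hmeasq : StronglyMeasurableAtFilter q (nhds r) volume :=
      (hqc.mono Ioo_subset_Icc_self).stronglyMeasurableAtFilter isOpen_Ioo r hr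
    have hGg' : HasDerivAt Gg (g r) r :=
      intervalIntegral.integral_hasDerivAt_right (hgint r hricc) hmeasg
        (hgc.continuousAt hnhds)
    have hGq' : HasDerivAt Gq (q r) r :=
      intervalIntegral.integral_hasDerivAt_right (hqint r hricc) hmeasq
        (hqc.continuousAt hnhds)
    have hlin : HasDerivAt (fun u : ℝ => b - u) (-1) r := by
      simpa using (hasDerivAt_id r).const_sub b
    have hprod : HasDerivAt (fun u => (b - u) * Gg u) ((-1) * Gg r + (b - r) * g r) r :=
      hlin.mul hGg'
    have hεq : HasDerivAt (fun u => ε * Gq u) (ε * q r) r := hGq'.const_mul ε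
    exact (hqP'.add hprod).add hεq
  -- the derivative is nonpositive
  have hdernp : ∀ r ∈ Ioo a b,
      2 * ((x r : Fin n → ℝ) ⬝ᵥ P.mulVec (d r)) + ((-1) * Gg r + (b - r) * g r)
        + ε * q r ≤ 0 := by
    intro r hr
    have hricc : r ∈ Icc a b := Ioo_subset_Icc_self hr
    set X : Fin n → ℝ := (x r : Fin n → ℝ) with hX
    set D : Fin n → ℝ := (d r : Fin n → ℝ) with hD
    set xa : Fin n → ℝ := (x a : Fin n → ℝ) with hxa
    set c : Fin n → ℝ := (P₂ᵀ * A₁)ᵀ.mulVec X + (P₃ᵀ * A₁)ᵀ.mulVec D with hc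
    have hDdef : D = A.mulVec X + A₁.mulVec xa := by
        rw [hD, hX, hxa]; simp [hd, mulVecE]
    have hdesc := descriptor_identity A A₁ P P₂ P₃ X D xa hDdef
    -- v = ∫ d
    have hxder : ∀ s ∈ Ioo a r, HasDerivWithinAt x (d s) (Ioi s) s := by
      intro s hs
      have : s ∈ Ioo a b := ⟨hs.1, lt_trans hs.2 hr.2⟩
      exact ((hx s (Ioo_subset_Icc_self this)).hasDerivAt
        (Icc_mem_nhds this.1 this.2)).hasDerivWithinAt
    have hdint : IntervalIntegrable d volume a r := by
      apply ContinuousOn.intervalIntegrable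
      rw [Set.uIcc_of_le hricc.1]
      exact hdc.mono (Icc_subset_Icc le_rfl hricc.2)
    have hvint : (∫ s in a..r, d s) = x r - x a :=
      intervalIntegral.integral_eq_sub_of_hasDeriv_right_of_le hricc.1
        (hxc.mono (Icc_subset_Icc le_rfl hricc.2)) hxder hdint
    -- c ⬝ᵥ v as an integral
    have hdcomp : ∀ i : Fin n, IntervalIntegrable (fun s => (d s : Fin n → ℝ) i) volume a r := by
      intro i
      have := (EuclideanSpace.proj (𝕜 := ℝ) i).intervalIntegral_comp_comm hdint
      apply ContinuousOn.intervalIntegrable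
      rw [Set.uIcc_of_le hricc.1]
      exact (EuclideanSpace.proj (𝕜 := ℝ) i).continuous.comp_continuousOn
        (hdc.mono (Icc_subset_Icc le_rfl hricc.2))
    have hcint : (∫ s in a..r, c ⬝ᵥ (d s : Fin n → ℝ)) = c ⬝ᵥ (X - xa) := by
      have step1 : (∫ s in a..r, c ⬝ᵥ (d s : Fin n → ℝ))
          = ∑ i : Fin n, ∫ s in a..r, c i * (d s : Fin n → ℝ) i := by
        rw [← intervalIntegral.integral_finset_sum]
        · rfl
        · intro i _
          exact (hdcomp i).const_mul (c i)
      rw [step1]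
      have step2 : ∀ i : Fin n, (∫ s in a..r, c i * (d s : Fin n → ℝ) i)
          = c i * ((x r - x a : EuclideanSpace ℝ (Fin n)) : Fin n → ℝ) i := by
        intro i
        rw [intervalIntegral.integral_const_mul]
        congr 1
        have h3 := (EuclideanSpace.proj (𝕜 := ℝ) i).intervalIntegral_comp_comm hdint
        rw [hvint] at h3
        exact h3
      rw [Finset.sum_congr rfl (fun i _ => step2 i)]
      rfl
    -- pointwise AM-GM bound and integral inequality
    set γ : ℝ := c ⬝ᵥ U⁻¹.mulVec c with hγ
    have hptw : ∀ s ∈ Icc a r, -2 * (c ⬝ᵥ (d s : Fin n → ℝ)) ≤ γ + g s := by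
      intro s _
      have h := amgm_U U hU (-c) (d s : Fin n → ℝ)
      have e : (-c) ⬝ᵥ U⁻¹.mulVec (-c) = γ := by
        rw [Matrix.mulVec_neg, dotProduct_neg, neg_dotProduct, neg_neg]
      have e2 : 2 * ((-c) ⬝ᵥ (d s : Fin n → ℝ)) = -2 * (c ⬝ᵥ (d s : Fin n → ℝ)) := by
        rw [neg_dotProduct]; ring
      rw [e, e2] at h
      exact h
    have hcdc : ContinuousOn (fun s => c ⬝ᵥ (d s : Fin n → ℝ)) (Icc a r) := by
      apply continuousOn_finset_sum
      intro i _
      exact continuousOn_const.mul ((EuclideanSpace.proj (𝕜 := ℝ) i).continuous.comp_continuousOn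
        (hdc.mono (Icc_subset_Icc le_rfl hricc.2)))
    have hcdint : IntervalIntegrable (fun s => -2 * (c ⬝ᵥ (d s : Fin n → ℝ))) volume a r := by
      apply ContinuousOn.intervalIntegrable
      rw [Set.uIcc_of_le hricc.1]
      exact (continuousOn_const.mul hcdc)
    have hrhsint : IntervalIntegrable (fun s => γ + g s) volume a r :=
      (intervalIntegrable_const (c := γ)).add (hgint r hricc)
    have hintineq : (∫ s in a..r, -2 * (c ⬝ᵥ (d s : Fin n → ℝ)))
        ≤ ∫ s in a..r, (γ + g s) :=
      intervalIntegral.integral_mono_on hricc.1 hcdint hrhsint hptw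
    have hlhs : (∫ s in a..r, -2 * (c ⬝ᵥ (d s : Fin n → ℝ))) = -2 * (c ⬝ᵥ (X - xa)) := by
      rw [intervalIntegral.integral_const_mul, hcint]
    have hrhs : (∫ s in a..r, (γ + g s)) = (r - a) * γ + Gg r := by
      rw [intervalIntegral.integral_add intervalIntegrable_const (hgint r hricc),
        intervalIntegral.integral_const, smul_eq_mul]
    rw [hlhs, hrhs] at hintineq
    -- key LMI bound
    have hkb := hkey X D (r - a) (b - r) (by linarith [hr.1]) (by linarith [hr.2])
      (by linarith)
    rw [← hc, ← hγ] at hkb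
    have hgr : g r = D ⬝ᵥ U.mulVec D := rfl
    have hqr : q r = X ⬝ᵥ X := rfl
    have hDnn : 0 ≤ D ⬝ᵥ D := dotProduct_self_nonneg' D
    -- combine everything
    have h2PD : 2 * (X ⬝ᵥ P.mulVec D)
        = Sum.elim X D ⬝ᵥ (Matrix.fromBlocks
          (P₂ᵀ * (A + A₁) + (A + A₁)ᵀ * P₂)
          (P - P₂ᵀ + (A + A₁)ᵀ * P₃)
          (P - P₂ᵀ + (A + A₁)ᵀ * P₃)ᵀ
          (-P₃ - P₃ᵀ)).mulVec (Sum.elim X D) - 2 * (c ⬝ᵥ (X - xa)) := by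
      rw [hdesc, hc]
      ring
    rw [hgr, hqr]
    rw [show (x r : Fin n → ℝ) ⬝ᵥ P.mulVec (d r) = X ⬝ᵥ P.mulVec D from rfl]
    nlinarith [hkb, hintineq, h2PD, hDnn, hε, dotProduct_self_nonneg' X]
  -- antitone
  have hanti : AntitoneOn Z (Icc a b) := by
    apply antitoneOn_of_deriv_nonpos (convex_Icc a b) hZc
    · intro r hr
      rw [interior_Icc] at hr
      exact (hder r hr).differentiableAt.differentiableWithinAt
    · intro r hr
      rw [interior_Icc] at hr
      rw [(hder r hr).deriv]
      exact hdernp r hr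
  have hZa : Z a = (x a : Fin n → ℝ) ⬝ᵥ P.mulVec (x a) := by
    rw [hZ]
    simp [hGg, hGq, intervalIntegral.integral_same, hqP]
  have hmem_a : a ∈ Icc a b := left_mem_Icc.mpr hab.le
  constructor
  · intro r hr
    have hZr := hanti hmem_a hr hr.1
    rw [hZa] at hZr
    have h1 : 0 ≤ (b - r) * Gg r :=
      mul_nonneg (by linarith [hr.2]) (intervalIntegral.integral_nonneg hr.1
        (fun u _ => hgnn u))
    have h2 : 0 ≤ ε * Gq r :=
      mul_nonneg hε.le (intervalIntegral.integral_nonneg hr.1 (fun u _ => hqnn u))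
    rw [hZ] at hZr
    simp only at hZr
    rw [hqP] at hZr
    linarith
  · have hmem_b : b ∈ Icc a b := right_mem_Icc.mpr hab.le
    have hZb := hanti hmem_a hmem_b hab.le
    rw [hZa, hZ] at hZb
    simp only [sub_self, zero_mul, add_zero] at hZb
    rw [hqP] at hZb
    linarith [hZb]

open MeasureTheory Set in
/-- Lyapunov–Krasovskii LMI condition for asymptotic stability
of the sampled-data system with variable sampling instants `t_{k+1} - t_k ≤ Δ`. -/
theorem sampled_data_stable_of_LK_LMIs {n : ℕ} (A A₁ : Matrix (Fin n) (Fin n) ℝ)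
    (Δ : ℝ) (hΔ : 0 < Δ)
    (P U P₂ P₃ : Matrix (Fin n) (Fin n) ℝ) (hP : P.PosDef) (hU : U.PosDef)
    (hLMI1 : ∀ y : Fin n ⊕ Fin n → ℝ, y ≠ 0 →
      y ⬝ᵥ (Matrix.fromBlocks
          (P₂ᵀ * (A + A₁) + (A + A₁)ᵀ * P₂)
          (P - P₂ᵀ + (A + A₁)ᵀ * P₃)
          (P - P₂ᵀ + (A + A₁)ᵀ * P₃)ᵀ
          (-P₃ - P₃ᵀ + Δ • U)).mulVec y < 0)
    (hLMI2 : ∀ y : (Fin n ⊕ Fin n) ⊕ Fin n → ℝ, y ≠ 0 →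
      y ⬝ᵥ (Matrix.fromBlocks
          (Matrix.fromBlocks
            (P₂ᵀ * (A + A₁) + (A + A₁)ᵀ * P₂)
            (P - P₂ᵀ + (A + A₁)ᵀ * P₃)
            (P - P₂ᵀ + (A + A₁)ᵀ * P₃)ᵀ
            (-P₃ - P₃ᵀ))
          (Matrix.fromRows (-(Δ • (P₂ᵀ * A₁))) (-(Δ • (P₃ᵀ * A₁))))
          (Matrix.fromCols (-(Δ • (P₂ᵀ * A₁)))ᵀ (-(Δ • (P₃ᵀ * A₁)))ᵀ)
          (-(Δ • U))).mulVec y < 0) :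
    ∀ t : ℕ → ℝ, AdmissibleSampling Δ t →
      ∀ x : ℝ → EuclideanSpace ℝ (Fin n), IsSolution A A₁ t x →
        Filter.Tendsto x Filter.atTop (nhds 0) := by
  classical
  intro t hadm x hsol
  obtain ⟨ht0, hmono, hstep, htop⟩ := hadm
  obtain ⟨hxc0, hxd⟩ := hsol
  have hPs : Pᵀ = P := hP.1
  obtain ⟨ε, hεpos, hkey⟩ := key_bound A A₁ Δ hΔ P U P₂ P₃ hU hLMI1 hLMI2
  -- lower eigenvalue bound for P
  obtain ⟨εP, hεPpos, hPb⟩ := exists_neg_quad_bound (-P) (by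
    intro y hy
    have h1 := hP.dotProduct_mulVec_pos hy
    rw [Matrix.neg_mulVec, dotProduct_neg]
    simpa using h1)
  have hPlow : ∀ y : Fin n → ℝ, εP * (y ⬝ᵥ y) ≤ y ⬝ᵥ P.mulVec y := by
    intro y
    have := hPb y
    rw [Matrix.neg_mulVec, dotProduct_neg] at this
    linarith
  -- sampling sequence basics
  have h0le : ∀ k, 0 ≤ t k := by
    intro k
    rw [← ht0]
    exact hmono.monotone (Nat.zero_le k)
  have hlt : ∀ k, t k < t (k + 1) := fun k => hmono (Nat.lt_succ_self k)
  -- abbreviations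
  set q : ℝ → ℝ := fun s => (x s : Fin n → ℝ) ⬝ᵥ (x s) with hq
  set qP : ℝ → ℝ := fun s => (x s : Fin n → ℝ) ⬝ᵥ P.mulVec (x s) with hqP
  have hqnn : ∀ s, 0 ≤ q s := fun s => dotProduct_self_nonneg' _
  have hqPnn : ∀ s, 0 ≤ qP s := fun s => psd_quad_nonneg hP.posSemidef _
  have hqc : ContinuousOn q (Ici 0) := by
    have h1 : Continuous fun y : EuclideanSpace ℝ (Fin n) => (y : Fin n → ℝ) ⬝ᵥ y := by
      simpa [Matrix.one_mulVec] using continuous_quadform (1 : Matrix (Fin n) (Fin n) ℝ)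
    exact h1.comp_continuousOn hxc0
  have hqint : ∀ u v : ℝ, 0 ≤ u → u ≤ v → IntervalIntegrable q volume u v := by
    intro u v hu huv
    apply ContinuousOn.intervalIntegrable
    rw [Set.uIcc_of_le huv]
    exact hqc.mono (fun s hs => le_trans hu hs.1)
  -- interval estimates
  have hIk := fun k : ℕ => interval_estimate hPs hU hεpos hkey (hlt k)
    (hstep k) x (hxd k)
  set m : ℕ → ℝ := fun k => qP (t k) with hm
  have hmdec : ∀ k, m (k + 1) ≤ m k := by
    intro k
    have h2 := (hIk k).2
    have h3 : 0 ≤ ∫ s in (t k)..(t (k + 1)), q s :=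
      intervalIntegral.integral_nonneg (hlt k).le (fun u _ => hqnn u)
    have h4 : 0 ≤ ε * ∫ s in (t k)..(t (k + 1)), q s := mul_nonneg hεpos.le h3
    show qP (t (k + 1)) ≤ qP (t k)
    linarith [h2]
  have hmanti : ∀ j k : ℕ, j ≤ k → m k ≤ m j :=
    fun j k hjk => antitone_nat_of_succ_le hmdec hjk
  -- accumulated integral bound
  have hsum : ∀ K : ℕ, ε * (∫ s in (0:ℝ)..(t K), q s) + m K ≤ m 0 := by
    intro K
    induction K with
    | zero =>
      rw [ht0, intervalIntegral.integral_same]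
      simp
    | succ K ih =>
      have hadd : (∫ s in (0:ℝ)..(t (K + 1)), q s)
          = (∫ s in (0:ℝ)..(t K), q s) + ∫ s in (t K)..(t (K + 1)), q s :=
        (intervalIntegral.integral_add_adjacent_intervals
          (hqint 0 (t K) le_rfl (h0le K)) (hqint (t K) (t (K + 1)) (h0le K) (hlt K).le)).symm
      have h2 := (hIk K).2
      rw [hadd, mul_add]
      show ε * _ + ε * _ + qP (t (K + 1)) ≤ m 0
      have : qP (t (K+1)) + ε * ∫ s in (t K)..(t (K+1)), q s ≤ m K := h2
      linarith [ih]
  -- uniform bound on qP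
  have hcover : ∀ r : ℝ, 0 ≤ r → ∃ k, t k ≤ r ∧ r ≤ t (k + 1) := by
    intro r hr
    have hex : ∃ k, r < t k := (htop.eventually_gt_atTop r).exists
    have hK0 : Nat.find hex ≠ 0 := by
      intro h0
      have := Nat.find_spec hex
      rw [h0, ht0] at this
      linarith
    obtain ⟨K, hK⟩ := Nat.exists_eq_succ_of_ne_zero hK0
    refine ⟨K, ?_, ?_⟩
    · have := Nat.find_min hex (m := K) (by omega)
      push_neg at this
      exact this
    · have := Nat.find_spec hex
      rw [hK] at this
      exact this.le
  have hqPbound : ∀ r : ℝ, 0 ≤ r → qP r ≤ m 0 := by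
    intro r hr
    obtain ⟨k, hk1, hk2⟩ := hcover r hr
    have := (hIk k).1 r ⟨hk1, hk2⟩
    exact le_trans this (hmanti 0 k (Nat.zero_le k))
  have hm0nn : 0 ≤ m 0 := hqPnn _
  -- uniform bound on the norm
  set B : ℝ := Real.sqrt (m 0 / εP) with hB
  have hnormbound : ∀ r : ℝ, 0 ≤ r → ‖x r‖ ≤ B := by
    intro r hr
    have h1 : εP * q r ≤ qP r := hPlow (x r)
    have h2 : q r ≤ m 0 / εP := by
      rw [le_div_iff₀ hεPpos]
      calc q r * εP = εP * q r := by ring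
        _ ≤ qP r := h1
        _ ≤ m 0 := hqPbound r hr
    have h3 : ‖x r‖ = Real.sqrt (q r) := by
      rw [show q r = ‖x r‖ ^ 2 from dot_self_eq_normsq (x r), Real.sqrt_sq (norm_nonneg _)]
    rw [h3, hB]
    exact Real.sqrt_le_sqrt h2
  have hBnn : 0 ≤ B := Real.sqrt_nonneg _
  -- Lipschitz constant
  set L : ℝ := ‖Matrix.toEuclideanCLM (𝕜 := ℝ) A‖ * B + ‖Matrix.toEuclideanCLM (𝕜 := ℝ) A₁‖ * B
    with hL
  have hLnn : 0 ≤ L :=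
    add_nonneg (mul_nonneg (norm_nonneg _) hBnn) (mul_nonneg (norm_nonneg _) hBnn)
  have hlipk : ∀ k : ℕ, ∀ u ∈ Icc (t k) (t (k + 1)), ∀ v ∈ Icc (t k) (t (k + 1)),
      ‖x v - x u‖ ≤ L * ‖v - u‖ := by
    intro k u hu v hv
    apply Convex.norm_image_sub_le_of_norm_hasDerivWithin_le (hxd k) _ (convex_Icc _ _) hu hv
    intro s hs
    have hs0 : 0 ≤ s := le_trans (h0le k) hs.1
    calc ‖mulVecE A (x s) + mulVecE A₁ (x (t k))‖
        ≤ ‖mulVecE A (x s)‖ + ‖mulVecE A₁ (x (t k))‖ := norm_add_le _ _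
      _ ≤ ‖Matrix.toEuclideanCLM (𝕜 := ℝ) A‖ * B
          + ‖Matrix.toEuclideanCLM (𝕜 := ℝ) A₁‖ * B := by
          apply add_le_add
          · rw [mulVecE_eq_clm]
            calc ‖Matrix.toEuclideanCLM (𝕜 := ℝ) A (x s)‖
                ≤ ‖Matrix.toEuclideanCLM (𝕜 := ℝ) A‖ * ‖x s‖ :=
                  (Matrix.toEuclideanCLM (𝕜 := ℝ) A).le_opNorm _
              _ ≤ _ := by
                  apply mul_le_mul_of_nonneg_left (hnormbound s hs0) (norm_nonneg _)
          · rw [mulVecE_eq_clm]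
            calc ‖Matrix.toEuclideanCLM (𝕜 := ℝ) A₁ (x (t k))‖
                ≤ ‖Matrix.toEuclideanCLM (𝕜 := ℝ) A₁‖ * ‖x (t k)‖ :=
                  (Matrix.toEuclideanCLM (𝕜 := ℝ) A₁).le_opNorm _
              _ ≤ _ := by
                  apply mul_le_mul_of_nonneg_left (hnormbound (t k) (h0le k)) (norm_nonneg _)
      _ = L := rfl
  -- global Lipschitz property on [0, ∞)
  have hglipK : ∀ K : ℕ, ∀ u v : ℝ, 0 ≤ u → u ≤ v → v ≤ t (K + 1) →
      ‖x v - x u‖ ≤ L * (v - u) := by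
    intro K
    induction K with
    | zero =>
      intro u v hu huv hv
      have hIcc : u ∈ Icc (t 0) (t 1) := ⟨by rw [ht0]; exact hu, le_trans huv hv⟩
      have hIcc2 : v ∈ Icc (t 0) (t 1) := ⟨by rw [ht0]; linarith, hv⟩
      have := hlipk 0 u hIcc v hIcc2
      rwa [Real.norm_eq_abs, abs_of_nonneg (by linarith)] at this
    | succ K ih =>
      intro u v hu huv hv
      by_cases hvK : v ≤ t (K + 1)
      · exact ih u v hu huv hvK
      · push_neg at hvK
        by_cases huK : t (K + 1) ≤ u
        · have hIcc : u ∈ Icc (t (K + 1)) (t (K + 2)) := ⟨huK, le_trans huv hv⟩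
          have hIcc2 : v ∈ Icc (t (K + 1)) (t (K + 2)) := ⟨hvK.le, hv⟩
          have := hlipk (K + 1) u hIcc v hIcc2
          rwa [Real.norm_eq_abs, abs_of_nonneg (by linarith)] at this
        · push_neg at huK
          have h1 : ‖x (t (K + 1)) - x u‖ ≤ L * (t (K + 1) - u) :=
            ih u (t (K + 1)) hu huK.le le_rfl
          have hIcc : t (K + 1) ∈ Icc (t (K + 1)) (t (K + 2)) :=
            ⟨le_rfl, (hlt (K + 1)).le⟩
          have hIcc2 : v ∈ Icc (t (K + 1)) (t (K + 2)) := ⟨hvK.le, hv⟩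
          have h2 := hlipk (K + 1) (t (K + 1)) hIcc v hIcc2
          rw [Real.norm_eq_abs, abs_of_nonneg (by linarith)] at h2
          calc ‖x v - x u‖ = ‖(x v - x (t (K + 1))) + (x (t (K + 1)) - x u)‖ := by
                congr 1; abel
            _ ≤ ‖x v - x (t (K + 1))‖ + ‖x (t (K + 1)) - x u‖ := norm_add_le _ _
            _ ≤ L * (v - t (K + 1)) + L * (t (K + 1) - u) := add_le_add h2 h1
            _ = L * (v - u) := by ring
  have hglip : ∀ u v : ℝ, 0 ≤ u → u ≤ v → ‖x v - x u‖ ≤ L * (v - u) := by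
    intro u v hu huv
    obtain ⟨K, hK⟩ := (htop.eventually_gt_atTop v).exists
    exact hglipK K u v hu huv (le_trans hK.le (hmono.monotone (Nat.le_succ K)))
  -- total integral bound
  have hItotal : ∀ T : ℝ, 0 ≤ T → ε * (∫ s in (0:ℝ)..T, q s) ≤ m 0 := by
    intro T hT
    obtain ⟨K, hK⟩ := (htop.eventually_gt_atTop T).exists
    have hsplit : (∫ s in (0:ℝ)..(t K), q s)
        = (∫ s in (0:ℝ)..T, q s) + ∫ s in T..(t K), q s :=
      (intervalIntegral.integral_add_adjacent_intervals
        (hqint 0 T le_rfl hT) (hqint T (t K) hT hK.le)).symm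
    have h2 : 0 ≤ ∫ s in T..(t K), q s :=
      intervalIntegral.integral_nonneg hK.le (fun u hu => hqnn u)
    have h3 := hsum K
    have h4 : m K ≥ 0 := hqPnn _
    rw [hsplit, mul_add] at h3
    have h5 : 0 ≤ ε * ∫ s in T..(t K), q s := mul_nonneg hεpos.le h2
    linarith
  -- conclusion via a Barbalat-type argument
  rw [tendsto_zero_iff_norm_tendsto_zero]
  rw [Metric.tendsto_atTop]
  intro δ hδ
  by_contra hcon
  push_neg at hcon
  have hfreq : ∀ N : ℝ, ∃ r, N ≤ r ∧ 0 ≤ r ∧ δ ≤ ‖x r‖ := by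
    intro N
    obtain ⟨r, hr1, hr2⟩ := hcon (max N 0)
    refine ⟨r, le_trans (le_max_left _ _) hr1, le_trans (le_max_right _ _) hr1, ?_⟩
    rw [Real.dist_eq, sub_zero, abs_of_nonneg (norm_nonneg _)] at hr2
    linarith
  set η : ℝ := δ / (2 * (L + 1)) with hη
  have hηpos : 0 < η := by
    apply div_pos hδ
    nlinarith [hLnn]
  set κ : ℝ := η * (δ / 2 * (δ / 2)) with hκ
  have hκpos : 0 < κ := by
    apply mul_pos hηpos
    nlinarith [hδ]
  -- on [r, r+η] the norm stays above δ/2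
  have hlower : ∀ r : ℝ, 0 ≤ r → δ ≤ ‖x r‖ → ∀ s ∈ Icc r (r + η), δ / 2 ≤ ‖x s‖ := by
    intro r hr hxr s hs
    have hdiff : ‖x s - x r‖ ≤ L * (s - r) := hglip r s hr hs.1
    have hLs : L * (s - r) ≤ L * η := by
      apply mul_le_mul_of_nonneg_left _ hLnn
      linarith [hs.2]
    have hLη : L * η ≤ δ / 2 := by
      have h2L : (0:ℝ) < 2 * (L + 1) := by nlinarith [hLnn]
      rw [hη, mul_comm, div_mul_eq_mul_div, div_le_div_iff₀ h2L two_pos]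
      nlinarith [hLnn, hδ]
    have : ‖x r‖ - ‖x s‖ ≤ ‖x s - x r‖ := by
      have := norm_sub_norm_le (x r) (x s)
      rwa [show ‖x r - x s‖ = ‖x s - x r‖ from norm_sub_rev _ _] at this
    have h9 : ‖x s - x r‖ ≤ δ / 2 := le_trans hdiff (le_trans hLs hLη)
    have hcmp : ‖x r‖ - ‖x s‖ ≤ δ / 2 := le_trans this h9
    have hfin : δ - δ / 2 ≤ ‖x s‖ := by linarith [hxr, hcmp]
    linarith [hfin]
  -- each such window contributes at least κ
  have hwindow : ∀ r : ℝ, 0 ≤ r → δ ≤ ‖x r‖ → κ ≤ ∫ s in r..(r + η), q s := by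
    intro r hr hxr
    have hptw : ∀ s ∈ Icc r (r + η), δ / 2 * (δ / 2) ≤ q s := by
      intro s hs
      have h1 := hlower r hr hxr s hs
      have h2 : q s = ‖x s‖ ^ 2 := dot_self_eq_normsq (x s)
      rw [h2]
      nlinarith [h1, hδ]
    have hint : IntervalIntegrable q volume r (r + η) := hqint r (r + η) hr (by linarith)
    calc κ = (r + η - r) * (δ / 2 * (δ / 2)) := by rw [hκ]; ring_nf
      _ = ∫ _ in r..(r + η), δ / 2 * (δ / 2) := by
          rw [intervalIntegral.integral_const, smul_eq_mul]
      _ ≤ ∫ s in r..(r + η), q s :=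
          intervalIntegral.integral_mono_on (by linarith)
            intervalIntegrable_const hint hptw
  -- build unbounded accumulation
  have haccum : ∀ j : ℕ, ∃ T : ℝ, 0 ≤ T ∧ (j : ℝ) * κ ≤ ∫ s in (0:ℝ)..T, q s := by
    intro j
    induction j with
    | zero =>
      exact ⟨0, le_rfl, by simp [intervalIntegral.integral_same]⟩
    | succ j ih =>
      obtain ⟨T, hT0, hTj⟩ := ih
      obtain ⟨r, hrT, hr0, hrδ⟩ := hfreq T
      refine ⟨r + η, by linarith, ?_⟩
      have hsplit1 : (∫ s in (0:ℝ)..(r + η), q s)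
          = (∫ s in (0:ℝ)..T, q s) + ∫ s in T..(r + η), q s :=
        (intervalIntegral.integral_add_adjacent_intervals
          (hqint 0 T le_rfl hT0) (hqint T (r + η) hT0 (by linarith))).symm
      have hsplit2 : (∫ s in T..(r + η), q s)
          = (∫ s in T..r, q s) + ∫ s in r..(r + η), q s :=
        (intervalIntegral.integral_add_adjacent_intervals
          (hqint T r hT0 hrT) (hqint r (r + η) hr0 (by linarith))).symm
      have h1 : 0 ≤ ∫ s in T..r, q s :=
        intervalIntegral.integral_nonneg hrT (fun u _ => hqnn u)
      have h2 := hwindow r hr0 hrδ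
      rw [hsplit1, hsplit2]
      push_cast
      linarith
  -- contradiction
  obtain ⟨j, hj⟩ := exists_nat_gt (m 0 / (ε * κ))
  obtain ⟨T, hT0, hTj⟩ := haccum j
  have h1 := hItotal T hT0
  have h2 : ε * ((j : ℝ) * κ) ≤ ε * ∫ s in (0:ℝ)..T, q s :=
    mul_le_mul_of_nonneg_left hTj hεpos.le
  have h3 : (j : ℝ) * (ε * κ) ≤ m 0 := by nlinarith
  have h4 : m 0 / (ε * κ) < (j : ℝ) := hj
  have h5 : 0 < ε * κ := mul_pos hεpos hκpos
  rw [div_lt_iff₀ h5] at h4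
  linarith
end
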